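/- arXiv:2301.06750 — 7 statements merged into one kernel-verified Lean document; each statement's English description precedes it below -/
import Mathlib

section
/- Let n ≥ 1 and let A ⊆ (ℤ/5ℤ)^n be sum-free with |A| > (3/2)·5^(n-1). If A is contained in a union of two cosets of a proper subgroup H < (ℤ/5ℤ)^n, then there exists e ∉ H such that A ⊆ (e + H) ∪ (-e + H). -/
open Pointwise

def SumFree {G : Type*} [Add G] (S : Set G) : Prop :=
  ∀ a ∈ S, ∀ b ∈ S, a + b ∉ S

lemma fill {G : Type*} [AddCommGroup G] [Finite G] (H : AddSubgroup G) (x y : G)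
    (B C : Set G) (hB : B ⊆ x +ᵥ (H:Set G)) (hC : C ⊆ y +ᵥ (H:Set G))
    (hcard : Nat.card H < B.ncard + C.ncard) :
    ∀ z ∈ (x + y) +ᵥ (H:Set G), ∃ b ∈ B, ∃ c ∈ C, b + c = z := by
  intro z hz
  by_contra hcon
  push_neg at hcon
  set D : Set G := (fun c => z - c) '' C with hD
  have hDcard : D.ncard = C.ncard := Set.ncard_image_of_injective _ sub_right_injective
  have hDsub : D ⊆ x +ᵥ (H:Set G) := by
    rintro _ ⟨c, hc, rfl⟩
    have hzH : -(x + y) + z ∈ H := by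
      simpa [vadd_eq_add] using Set.mem_vadd_set_iff_neg_vadd_mem.1 hz
    have hcH : -y + c ∈ H := by
      simpa [vadd_eq_add] using Set.mem_vadd_set_iff_neg_vadd_mem.1 (hC hc)
    rw [Set.mem_vadd_set_iff_neg_vadd_mem]
    have he : -x + (z - c) = (-(x + y) + z) - (-y + c) := by abel
    simpa [vadd_eq_add, he] using H.sub_mem hzH hcH
  have hdisj : Disjoint B D := by
    rw [Set.disjoint_left]
    rintro b hb ⟨c, hc, rfl⟩
    exact hcon _ hb c hc (sub_add_cancel z c)
  have h1 : (B ∪ D).ncard ≤ (x +ᵥ (H:Set G)).ncard :=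
    Set.ncard_le_ncard (Set.union_subset hB hDsub) (Set.toFinite _)
  rw [Set.ncard_union_eq hdisj (Set.toFinite _) (Set.toFinite _), Set.ncard_vadd_set] at h1
  have h2 : (H:Set G).ncard = Nat.card H := (Nat.card_coe_set_eq _).symm
  omega

lemma compare_mem {G : Type*} [AddCommGroup G] (H : AddSubgroup G) {x y z : G}
    (hz : z ∈ x +ᵥ (H:Set G)) (hz' : z ∉ y +ᵥ (H:Set G)) : -y + x ∉ H := by
  intro hmem
  apply hz'
  rw [Set.mem_vadd_set_iff_neg_vadd_mem]
  have hxz : -x + z ∈ H := by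
    simpa [vadd_eq_add] using Set.mem_vadd_set_iff_neg_vadd_mem.1 hz
  have he : -y + z = (-y + x) + (-x + z) := by abel
  rw [vadd_eq_add, he]; exact H.add_mem hmem hxz

theorem stmt_1 (n : ℕ) (hn : 1 ≤ n) (A : Set (Fin n → ZMod 5))
    (hA : SumFree A) (hcard : 2 * A.ncard > 3 * 5 ^ (n - 1))
    (H : AddSubgroup (Fin n → ZMod 5)) (hH : H ≠ ⊤)
    (g₁ g₂ : Fin n → ZMod 5)
    (hsub : A ⊆ (g₁ +ᵥ (H : Set (Fin n → ZMod 5))) ∪ (g₂ +ᵥ (H : Set (Fin n → ZMod 5)))) :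
    ∃ e : Fin n → ZMod 5, e ∉ H ∧
      A ⊆ (e +ᵥ (H : Set (Fin n → ZMod 5))) ∪ (-e +ᵥ (H : Set (Fin n → ZMod 5))) := by
  classical
  have hcardG : Nat.card (Fin n → ZMod 5) = 5 ^ n := by
    simp [Nat.card_eq_fintype_card]
  have hexp : ∀ x : Fin n → ZMod 5, (5 : ℕ) • x = 0 := by
    intro x; funext i
    have : ∀ c : ZMod 5, (5 : ℕ) • c = 0 := by decide
    simpa using this (x i)
  have hdvd : Nat.card H ∣ 5 ^ n := hcardG ▸ AddSubgroup.card_addSubgroup_dvd_card H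
  obtain ⟨m, hmn, hm⟩ := (Nat.dvd_prime_pow (by norm_num)).1 hdvd
  have hmlt : m < n := by
    rcases lt_or_eq_of_le hmn with h | h
    · exact h
    · exact absurd (AddSubgroup.eq_top_of_card_eq H (by rw [hm, h, hcardG])) hH
  have hdvd' : Nat.card H ∣ 5 ^ (n - 1) := by
    rw [hm]; exact pow_dvd_pow 5 (by omega)
  have hcoset : ∀ x : Fin n → ZMod 5, (x +ᵥ (H:Set (Fin n → ZMod 5))).ncard = Nat.card H := by
    intro x; rw [Set.ncard_vadd_set]; exact (Nat.card_coe_set_eq _).symm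
  set A₁ : Set (Fin n → ZMod 5) := A ∩ (g₁ +ᵥ (H:Set (Fin n → ZMod 5))) with hA₁
  set A₂ : Set (Fin n → ZMod 5) := A ∩ (g₂ +ᵥ (H:Set (Fin n → ZMod 5))) with hA₂
  have hAle : A.ncard ≤ A₁.ncard + A₂.ncard := by
    have hAun : A = A₁ ∪ A₂ := by
      ext z; constructor
      · intro hz; rcases hsub hz with h | h
        · exact Or.inl ⟨hz, h⟩
        · exact Or.inr ⟨hz, h⟩
      · rintro (⟨h, _⟩ | ⟨h, _⟩) <;> exact h
    rw [hAun]; exact Set.ncard_union_le _ _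
  have hA₁le : A₁.ncard ≤ Nat.card H := by
    rw [← hcoset g₁]
    exact Set.ncard_le_ncard Set.inter_subset_right (Set.toFinite _)
  have hA₂le : A₂.ncard ≤ Nat.card H := by
    rw [← hcoset g₂]
    exact Set.ncard_le_ncard Set.inter_subset_right (Set.toFinite _)
  -- card H = 5 ^ (n-1)
  have hHcard : Nat.card H = 5 ^ (n - 1) := by
    obtain ⟨t, ht⟩ := hdvd'
    have hHpos : 0 < Nat.card H := Nat.card_pos
    have htpos : 0 < t := by
      rcases Nat.eq_zero_or_pos t with h | h
      · exfalso; have : (5:ℕ) ^ (n-1) = 0 := by rw [ht, h, mul_zero]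
        exact absurd this (by positivity)
      · exact h
    have ht1 : t = 1 := by nlinarith [hcard, hAle, hA₁le, hA₂le]
    rw [ht, ht1, mul_one]
  have hbig : 3 * Nat.card H < 2 * A.ncard := by omega
  have hbig₁ : Nat.card H < 2 * A₁.ncard := by omega
  have hbig₂ : Nat.card H < 2 * A₂.ncard := by omega
  have hav11 : ∀ z ∈ A, z ∉ (g₁ + g₁) +ᵥ (H:Set (Fin n → ZMod 5)) := by
    intro z hz hmem
    obtain ⟨b, hb, c, hc, hbc⟩ := fill H g₁ g₁ A₁ A₁ Set.inter_subset_right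
      Set.inter_subset_right (by omega) z hmem
    exact hA b hb.1 c hc.1 (hbc ▸ hz)
  have hav22 : ∀ z ∈ A, z ∉ (g₂ + g₂) +ᵥ (H:Set (Fin n → ZMod 5)) := by
    intro z hz hmem
    obtain ⟨b, hb, c, hc, hbc⟩ := fill H g₂ g₂ A₂ A₂ Set.inter_subset_right
      Set.inter_subset_right (by omega) z hmem
    exact hA b hb.1 c hc.1 (hbc ▸ hz)
  obtain ⟨a₁, ha₁⟩ : A₁.Nonempty := Set.nonempty_of_ncard_ne_zero (by omega)
  obtain ⟨a₂, ha₂⟩ : A₂.Nonempty := Set.nonempty_of_ncard_ne_zero (by omega)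
  have hg₁ : g₁ ∉ H := by
    have h := compare_mem H ha₁.2 (hav11 a₁ ha₁.1)
    intro hmem
    apply h
    have he : -(g₁ + g₁) + g₁ = -g₁ := by abel
    rw [he]; exact H.neg_mem hmem
  have hg₂ : g₂ ∉ H := by
    have h := compare_mem H ha₂.2 (hav22 a₂ ha₂.1)
    intro hmem
    apply h
    have he : -(g₂ + g₂) + g₂ = -g₂ := by abel
    rw [he]; exact H.neg_mem hmem
  have h21 : -(g₁ + g₁) + g₂ ∉ H := compare_mem H ha₂.2 (hav11 a₂ ha₂.1)
  have h12 : -(g₂ + g₂) + g₁ ∉ H := compare_mem H ha₁.2 (hav22 a₁ ha₁.1)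
  have hne : -g₁ + g₂ ∉ H := by
    intro hmem
    have hsub' : A ⊆ g₂ +ᵥ (H:Set (Fin n → ZMod 5)) := by
      intro z hz
      rcases hsub hz with h | h
      · rw [Set.mem_vadd_set_iff_neg_vadd_mem] at h ⊢
        have he : -g₂ + z = -(-g₁ + g₂) + (-g₁ + z) := by abel
        rw [vadd_eq_add, he]; exact H.add_mem (H.neg_mem hmem) (by simpa [vadd_eq_add] using h)
      · exact h
    have : A.ncard ≤ Nat.card H := by
      rw [← hcoset g₂]; exact Set.ncard_le_ncard hsub' (Set.toFinite _)
    omega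
  -- exponent-5 identities
  have h5z : (5:ℤ) • g₁ = 0 := by
    have h := hexp g₁
    rw [← natCast_zsmul, show ((5:ℕ):ℤ) = (5:ℤ) from by norm_num] at h
    exact h
  have e2 : (2:ℤ) • g₁ = g₁ + g₁ := two_zsmul g₁
  have e3 : (3:ℤ) • g₁ = g₁ + g₁ + g₁ := by
    rw [show (3:ℤ) = 2 + 1 by norm_num, add_zsmul, two_zsmul, one_zsmul]
  have e4 : (4:ℤ) • g₁ = g₁ + g₁ + g₁ + g₁ := by
    rw [show (4:ℤ) = 3 + 1 by norm_num, add_zsmul, e3, one_zsmul]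
  have e5 : g₁ + g₁ + g₁ + g₁ + g₁ = 0 := by
    rw [show g₁ + g₁ + g₁ + g₁ + g₁ = (5:ℤ) • g₁ by
      rw [show (5:ℤ) = 4 + 1 by norm_num, add_zsmul, e4, one_zsmul]]
    exact h5z
  -- quotient argument
  have key : g₁ + g₂ ∈ H := by
    have hcardQ : Nat.card ((Fin n → ZMod 5) ⧸ H) = 5 := by
      have h1 := AddSubgroup.index_mul_card H
      have h2 : H.index = Nat.card ((Fin n → ZMod 5) ⧸ H) := rfl
      rw [h2, hHcard, hcardG] at h1
      have h5 : (5:ℕ) ^ n = 5 * 5 ^ (n-1) := by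
        rw [← pow_succ']; congr 1; omega
      rw [h5] at h1
      have hpos : 0 < (5:ℕ) ^ (n-1) := by positivity
      exact Nat.eq_of_mul_eq_mul_right hpos h1
    set a : (Fin n → ZMod 5) ⧸ H := QuotientAddGroup.mk g₁ with ha
    have haz : a ≠ 0 := by
      rw [ha, Ne, QuotientAddGroup.eq_zero_iff]; exact hg₁
    have h5a : (5:ℕ) • a = 0 := by
      rw [ha, ← QuotientAddGroup.mk_nsmul, hexp g₁]; rfl
    have hord : addOrderOf a = 5 := by
      have hdvd5 : addOrderOf a ∣ 5 := addOrderOf_dvd_of_nsmul_eq_zero h5a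
      rcases (Nat.Prime.eq_one_or_self_of_dvd (by norm_num) _ hdvd5) with h | h
      · exact absurd (AddMonoid.addOrderOf_eq_one_iff.1 h) haz
      · exact h
    have htop : AddSubgroup.zmultiples a = ⊤ := by
      apply AddSubgroup.eq_top_of_card_eq
      rw [Nat.card_zmultiples, hord, hcardQ]
    have hmemb : (QuotientAddGroup.mk g₂ : (Fin n → ZMod 5) ⧸ H) ∈ AddSubgroup.zmultiples a := by
      rw [htop]; trivial
    obtain ⟨k, hk⟩ := AddSubgroup.mem_zmultiples_iff.1 hmemb
    have h5a' : (5:ℤ) • a = 0 := by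
      rw [ha, ← QuotientAddGroup.mk_zsmul, h5z]; rfl
    have hk' : (k % 5) • a = QuotientAddGroup.mk g₂ := by
      have hdecomp : k = 5 * (k / 5) + k % 5 := (Int.mul_ediv_add_emod k 5).symm
      calc (k % 5) • a = (k % 5) • a + (k / 5) • ((5:ℤ) • a) := by rw [h5a']; simp
        _ = (k % 5) • a + (5 * (k / 5)) • a := by rw [smul_smul, mul_comm]
        _ = (5 * (k / 5) + k % 5) • a := by rw [add_zsmul]; abel
        _ = k • a := by rw [← hdecomp]
        _ = _ := hk
    have hmm : -((k % 5) • g₁) + g₂ ∈ H := by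
      apply (QuotientAddGroup.eq (s := H)).1
      rw [QuotientAddGroup.mk_zsmul]
      exact hk'.symm ▸ rfl
    have hcases : k % 5 = 0 ∨ k % 5 = 1 ∨ k % 5 = 2 ∨ k % 5 = 3 ∨ k % 5 = 4 := by omega
    rcases hcases with hv | hv | hv | hv | hv <;> rw [hv] at hmm
    · rw [zero_zsmul, neg_zero, zero_add] at hmm
      exact absurd hmm hg₂
    · rw [one_zsmul] at hmm
      exfalso; apply hne; exact hmm
    · rw [e2] at hmm
      exact absurd hmm h21
    · rw [e3] at hmm
      exfalso; apply h12
      have heq : -(g₂ + g₂) + g₁ =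
          -((-(g₁ + g₁ + g₁) + g₂) + (-(g₁ + g₁ + g₁) + g₂)) - (g₁ + g₁ + g₁ + g₁ + g₁) := by
        abel
      rw [e5, sub_zero] at heq
      rw [heq]
      exact H.neg_mem (H.add_mem hmm hmm)
    · rw [e4] at hmm
      have heq : g₁ + g₂ = (-(g₁ + g₁ + g₁ + g₁) + g₂) + (g₁ + g₁ + g₁ + g₁ + g₁) := by abel
      rw [e5, add_zero] at heq
      rw [heq]
      exact hmm
  refine ⟨g₁, hg₁, ?_⟩
  intro z hz
  rcases hsub hz with h | h
  · exact Or.inl h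
  · right
    rw [Set.mem_vadd_set_iff_neg_vadd_mem] at h ⊢
    have he : g₁ + z = (g₁ + g₂) + (-g₂ + z) := by abel
    rw [vadd_eq_add, neg_neg, he]; exact H.add_mem key (by simpa [vadd_eq_add] using h)
end

section
/- Let n ≥ 1 and let A ⊆ (ℤ/5ℤ)^n be sum-free with |A| > (3/2)·5^(n-1). Then A cannot have non-empty intersection with exactly three cosets of a maximal proper subgroup of (ℤ/5ℤ)^n. -/
set_option maxHeartbeats 2000000 in
private lemma comb_lemma (M : ℕ) (a : ZMod 5 → ℕ) (B : Finset (ZMod 5)) (hB : B.card = 3)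
    (hle : ∀ i ∈ B, a i ≤ M)
    (hpair : ∀ i ∈ B, ∀ j ∈ B, i + j ∈ B → a i + a j ≤ M) :
    2 * ∑ i ∈ B, a i ≤ 3 * M := by
  obtain ⟨x, y, z, hxy, hxz, hyz, rfl⟩ := Finset.card_eq_three.mp hB
  rw [Finset.sum_insert (by simp [hxy, hxz]), Finset.sum_insert (by simp [hyz]),
    Finset.sum_singleton]
  have h1 := hle x (by simp); have h2 := hle y (by simp); have h3 := hle z (by simp)
  have pxx := hpair x (by simp) x (by simp)
  have pxy := hpair x (by simp) y (by simp)
  have pxz := hpair x (by simp) z (by simp)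
  have pyy := hpair y (by simp) y (by simp)
  have pyz := hpair y (by simp) z (by simp)
  have pzz := hpair z (by simp) z (by simp)
  clear hpair hle
  fin_cases x <;> fin_cases y <;> fin_cases z <;>
    simp_all (config := { decide := true }) only [Finset.mem_insert, Finset.mem_singleton,
      true_implies, false_implies] <;>
    omega

theorem stmt_2 (n : ℕ) (hn : 1 ≤ n) (A : Set (Fin n → ZMod 5))
    (hA : SumFree A) (hcard : 2 * A.ncard > 3 * 5 ^ (n - 1))
    (H : AddSubgroup (Fin n → ZMod 5)) (hH : IsCoatom H) :
    (QuotientAddGroup.mk '' A : Set ((Fin n → ZMod 5) ⧸ H)).ncard ≠ 3 := by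
  intro himg
  classical
  set M := 5 ^ (n - 1) with hM
  -- group-theoretic facts
  have hsurj : Function.Surjective (QuotientAddGroup.mk' H) := QuotientAddGroup.mk'_surjective H
  have h5 : ∀ q : ((Fin n → ZMod 5) ⧸ H), 5 • q = 0 := by
    intro q
    obtain ⟨x, rfl⟩ := hsurj q
    rw [← map_nsmul]
    convert map_zero (QuotientAddGroup.mk' H)
    funext i
    show (5 : ℕ) • x i = 0
    rw [nsmul_eq_mul, show ((5:ℕ) : ZMod 5) = 0 from ZMod.natCast_self 5, zero_mul]
  have hgen : ∀ q : ((Fin n → ZMod 5) ⧸ H), q ≠ 0 → AddSubgroup.zmultiples q = ⊤ := by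
    intro q hq
    obtain ⟨x, rfl⟩ := hsurj q
    have h1 : H < AddSubgroup.comap (QuotientAddGroup.mk' H)
        (AddSubgroup.zmultiples ((QuotientAddGroup.mk' H) x)) := by
      constructor
      · intro w hw
        have hw' : w ∈ (QuotientAddGroup.mk' H).ker := by
          rw [QuotientAddGroup.ker_mk' H]; exact hw
        have hw0 : (QuotientAddGroup.mk' H) w = 0 := AddMonoidHom.mem_ker.mp hw'
        exact AddSubgroup.mem_comap.mpr (by rw [hw0]; exact zero_mem _)
      · intro hle
        have hx : x ∈ AddSubgroup.comap (QuotientAddGroup.mk' H)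
            (AddSubgroup.zmultiples ((QuotientAddGroup.mk' H) x)) :=
          AddSubgroup.mem_comap.mpr (AddSubgroup.mem_zmultiples _)
        have hx' : x ∈ (QuotientAddGroup.mk' H).ker := by
          rw [QuotientAddGroup.ker_mk' H]; exact hle hx
        exact hq (AddMonoidHom.mem_ker.mp hx')
    have htop := hH.2 _ h1
    have hmc := AddSubgroup.map_comap_eq_self_of_surjective (f := QuotientAddGroup.mk' H) hsurj
      (AddSubgroup.zmultiples ((QuotientAddGroup.mk' H) x))
    rw [htop] at hmc
    rw [← hmc, AddSubgroup.map_top_of_surjective _ hsurj]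
  have hnt : ∃ q : ((Fin n → ZMod 5) ⧸ H), q ≠ 0 := by
    have hne : ¬ ∀ x : (Fin n → ZMod 5), x ∈ H := fun h => hH.1 ((AddSubgroup.eq_top_iff' H).mpr h)
    push_neg at hne
    obtain ⟨x, hx⟩ := hne
    refine ⟨QuotientAddGroup.mk' H x, fun h => hx ?_⟩
    have : x ∈ (QuotientAddGroup.mk' H).ker := AddMonoidHom.mem_ker.mpr h
    rwa [QuotientAddGroup.ker_mk' H] at this
  have hcardQ : Nat.card ((Fin n → ZMod 5) ⧸ H) = 5 := by
    obtain ⟨q, hq⟩ := hnt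
    have h1 : Nat.card (AddSubgroup.zmultiples q) = addOrderOf q := Nat.card_zmultiples q
    rw [hgen q hq] at h1
    have h2 : Nat.card (⊤ : AddSubgroup ((Fin n → ZMod 5) ⧸ H)) = Nat.card ((Fin n → ZMod 5) ⧸ H) :=
      Nat.card_congr AddSubgroup.topEquiv.toEquiv
    have hdvd : addOrderOf q ∣ 5 := addOrderOf_dvd_of_nsmul_eq_zero (h5 q)
    have hne1 : addOrderOf q ≠ 1 := by
      simpa [AddMonoid.addOrderOf_eq_one_iff] using hq
    rcases (by norm_num : Nat.Prime 5).eq_one_or_self_of_dvd _ hdvd with h | h <;> omega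
  have hcardH : Nat.card H = M := by
    have hlag := AddSubgroup.card_eq_card_quotient_mul_card_addSubgroup H
    have hcardG : Nat.card (Fin n → ZMod 5) = 5 ^ n := by
      simp [Nat.card_eq_fintype_card]
    rw [hcardG, hcardQ] at hlag
    have hp : (5:ℕ) ^ n = 5 * 5 ^ (n-1) := by
      conv_lhs => rw [show n = 1 + (n-1) by omega]
      rw [pow_add, pow_one]
    omega
  -- the equivalence with ZMod 5
  obtain ⟨e⟩ : Nonempty (ZMod 5 ≃+ ((Fin n → ZMod 5) ⧸ H)) := by
    obtain ⟨g, hg⟩ := hnt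
    have h5g : (zmultiplesHom ((Fin n → ZMod 5) ⧸ H) g) (5 : ℤ) = 0 := by
      show (5 : ℤ) • g = 0
      rw [show ((5:ℤ) • g) = (5:ℕ) • g by exact_mod_cast natCast_zsmul g 5]
      exact h5 g
    set f : ZMod 5 →+ ((Fin n → ZMod 5) ⧸ H) := ZMod.lift 5 ⟨zmultiplesHom ((Fin n → ZMod 5) ⧸ H) g, h5g⟩ with hf
    have hfsurj : Function.Surjective f := by
      intro q
      have hq : q ∈ AddSubgroup.zmultiples g := by rw [hgen g hg]; trivial
      obtain ⟨k, hk⟩ := AddSubgroup.mem_zmultiples_iff.mp hq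
      exact ⟨(k : ZMod 5), by rw [hf, ZMod.lift_coe]; exact hk⟩
    have hbij : Function.Bijective f := (Nat.bijective_iff_surjective_and_card f).mpr
      ⟨hfsurj, by rw [Nat.card_zmod, hcardQ]⟩
    exact ⟨AddEquiv.ofBijective f hbij⟩
  -- fibers
  have hfib : ∀ q : ((Fin n → ZMod 5) ⧸ H), ((QuotientAddGroup.mk ⁻¹' {q} : Set (Fin n → ZMod 5))).ncard = M := by
    intro q
    rw [← Nat.card_coe_set_eq,
      Nat.card_congr (QuotientAddGroup.preimageMkEquivAddSubgroupProdSet H {q})]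
    rw [Nat.card_prod, hcardH, Nat.card_coe_set_eq, Set.ncard_singleton, mul_one]
  -- counting setup
  set AF : Finset (Fin n → ZMod 5) := A.toFinite.toFinset with hAF
  have hAcard : A.ncard = AF.card := Set.ncard_eq_toFinset_card A A.toFinite
  set B : Finset ((Fin n → ZMod 5) ⧸ H) := AF.image QuotientAddGroup.mk with hB
  have hB3 : B.card = 3 := by
    have hcoe : (QuotientAddGroup.mk '' A : Set ((Fin n → ZMod 5) ⧸ H)) = ↑B := by
      rw [hB, Finset.coe_image, Set.Finite.coe_toFinset]
    rw [hcoe, Set.ncard_coe_finset] at himg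
    exact himg
  set a : ((Fin n → ZMod 5) ⧸ H) → ℕ := fun q => (AF.filter (fun x => QuotientAddGroup.mk x = q)).card with ha
  have hsum : AF.card = ∑ q ∈ B, a q :=
    Finset.card_eq_sum_card_fiberwise (fun x hx => Finset.mem_image_of_mem _ hx)
  -- fiber finsets
  have hfibF : ∀ q : ((Fin n → ZMod 5) ⧸ H), ∀ S : Finset (Fin n → ZMod 5), (∀ x ∈ S, QuotientAddGroup.mk x = q) → S.card ≤ M := by
    intro q S hS
    have hsub : ↑S ⊆ (QuotientAddGroup.mk ⁻¹' {q} : Set (Fin n → ZMod 5)) := by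
      intro x hx
      simp only [Set.mem_preimage, Set.mem_singleton_iff]
      exact hS x hx
    calc S.card = (↑S : Set (Fin n → ZMod 5)).ncard := (Set.ncard_coe_finset S).symm
      _ ≤ (QuotientAddGroup.mk ⁻¹' {q} : Set (Fin n → ZMod 5)).ncard :=
          Set.ncard_le_ncard hsub (Set.toFinite _)
      _ = M := hfib q
  have hle : ∀ q ∈ B, a q ≤ M := by
    intro q _
    exact hfibF q _ (fun x hx => (Finset.mem_filter.mp hx).2)
  have hpair : ∀ i ∈ B, ∀ j ∈ B, i + j ∈ B → a i + a j ≤ M := by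
    intro i _ j _ hij
    obtain ⟨z, hzA, hz⟩ := Finset.mem_image.mp hij
    by_contra hcon
    push_neg at hcon
    set S : Finset (Fin n → ZMod 5) := AF.filter (fun x => QuotientAddGroup.mk x = i) with hS
    set T : Finset (Fin n → ZMod 5) := (AF.filter (fun x => QuotientAddGroup.mk x = j)).image
      (fun y => z - y) with hT
    have hTcard : T.card = a j :=
      Finset.card_image_of_injective _ sub_right_injective
    have hmemT : ∀ w ∈ T, QuotientAddGroup.mk w = i := by
      intro w hw
      obtain ⟨y, hy, rfl⟩ := Finset.mem_image.mp hw
      have hyj : (QuotientAddGroup.mk y : ((Fin n → ZMod 5) ⧸ H)) = j := (Finset.mem_filter.mp hy).2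
      rw [QuotientAddGroup.mk_sub, hz, hyj]
      abel
    have hnd : ¬ Disjoint S T := by
      intro hd
      have hcup : ∀ x ∈ S ∪ T, QuotientAddGroup.mk x = i := by
        intro x hx
        rcases Finset.mem_union.mp hx with h | h
        · exact (Finset.mem_filter.mp h).2
        · exact hmemT x h
      have := hfibF i _ hcup
      rw [Finset.card_union_of_disjoint hd, hTcard] at this
      have hScard : S.card = a i := rfl
      omega
    obtain ⟨w, hwS, hwT⟩ := Finset.not_disjoint_iff.mp hnd
    obtain ⟨y, hy, hwy⟩ := Finset.mem_image.mp hwT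
    have hwA : w ∈ A := (Set.Finite.mem_toFinset _).mp (Finset.mem_filter.mp hwS).1
    have hyA : y ∈ A := (Set.Finite.mem_toFinset _).mp (Finset.mem_filter.mp hy).1
    have hzA' : z ∈ A := (Set.Finite.mem_toFinset _).mp hzA
    have : w + y = z := by rw [← hwy]; abel
    exact hA w hwA y hyA (this ▸ hzA')
  -- transfer to ZMod 5
  have hmemB : ∀ t : ZMod 5, t ∈ B.image e.symm → e t ∈ B := by
    intro t ht
    obtain ⟨u, hu, rfl⟩ := Finset.mem_image.mp ht
    rwa [AddEquiv.apply_symm_apply]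
  have hfin := comb_lemma M (fun t => a (e t)) (B.image e.symm)
    (by rw [Finset.card_image_of_injective _ e.symm.injective, hB3])
    (fun i hi => hle (e i) (hmemB i hi))
    (by
      intro i hi j hj hijm
      have := hmemB _ hijm
      rw [map_add] at this
      exact hpair (e i) (hmemB i hi) (e j) (hmemB j hj) this)
  have hsum2 : ∑ t ∈ B.image e.symm, a (e t) = ∑ q ∈ B, a q := by
    rw [Finset.sum_image (fun x _ y _ h => e.symm.injective h)]
    exact Finset.sum_congr rfl (fun q _ => by rw [AddEquiv.apply_symm_apply])
  rw [hsum2, ← hsum] at hfin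
  rw [hAcard] at hcard
  omega
end

section
/- Let n ≥ 1, let A ⊆ (ℤ/5ℤ)^n be sum-free, and let H < (ℤ/5ℤ)^n be a maximal proper subgroup. If some H-coset contains more than half of its elements in A (i.e., |A ∩ (g+H)| > |H|/2 for some g), then A has non-empty intersection with at most three H-cosets. -/
open Pointwise

theorem stmt_3 (n : ℕ) (hn : 1 ≤ n) (A : Set (Fin n → ZMod 5))
    (hA : SumFree A)
    (H : AddSubgroup (Fin n → ZMod 5)) (hH : IsCoatom H)
    (g : Fin n → ZMod 5)
    (hrich : 2 * (A ∩ (g +ᵥ (H : Set (Fin n → ZMod 5)))).ncard > Nat.card H) :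
    (QuotientAddGroup.mk '' A : Set ((Fin n → ZMod 5) ⧸ H)).ncard ≤ 3 := by
  classical
  set B : Set (Fin n → ZMod 5) := A ∩ (g +ᵥ (H : Set (Fin n → ZMod 5))) with hBdef
  have hcoset : ∀ c : Fin n → ZMod 5,
      (c +ᵥ (H : Set (Fin n → ZMod 5))).ncard = Nat.card H := by
    intro c
    rw [Set.ncard_vadd_set, ← Nat.card_coe_set_eq]
    rfl
  have hbound : ∀ (c : Fin n → ZMod 5) (X Y : Set (Fin n → ZMod 5)),
      X ⊆ c +ᵥ (H : Set (Fin n → ZMod 5)) → Y ⊆ c +ᵥ (H : Set (Fin n → ZMod 5)) →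
      Disjoint X Y → X.ncard + Y.ncard ≤ Nat.card H := by
    intro c X Y hX hY hdisj
    rw [← Set.ncard_union_eq hdisj (Set.toFinite X) (Set.toFinite Y), ← hcoset c]
    exact Set.ncard_le_ncard (Set.union_subset hX hY) (Set.toFinite _)
  have hBsub : B ⊆ g +ᵥ (H : Set (Fin n → ZMod 5)) := Set.inter_subset_right
  -- No element of A lies in H
  have key0 : ∀ z ∈ A, z ∉ (H : Set (Fin n → ZMod 5)) := by
    intro z hz hzH
    have h1 : ((z + ·) '' B) ⊆ g +ᵥ (H : Set (Fin n → ZMod 5)) := by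
      rintro _ ⟨b, hb, rfl⟩
      obtain ⟨h, hh, rfl⟩ := hBsub hb
      exact ⟨z + h, add_mem hzH hh, by simp [vadd_eq_add]; abel⟩
    have h2 : Disjoint ((z + ·) '' B) A := by
      rw [Set.disjoint_left]
      rintro _ ⟨b, hb, rfl⟩
      exact hA z hz b hb.1
    have h3 := hbound g _ _ h1 hBsub (h2.mono_right Set.inter_subset_left)
    rw [Set.ncard_image_of_injective _ (add_right_injective z)] at h3
    omega
  -- No element of A satisfies z - g - g ∈ H
  have key2 : ∀ z ∈ A, z - g - g ∉ (H : Set (Fin n → ZMod 5)) := by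
    intro z hz hzH
    have h1 : ((z - ·) '' B) ⊆ g +ᵥ (H : Set (Fin n → ZMod 5)) := by
      rintro _ ⟨b, hb, rfl⟩
      obtain ⟨h, hh, rfl⟩ := hBsub hb
      refine ⟨z - g - g - h, sub_mem hzH hh, ?_⟩
      simp only [vadd_eq_add]; abel
    have h2 : Disjoint ((z - ·) '' B) A := by
      rw [Set.disjoint_left]
      rintro _ ⟨b, hb, rfl⟩ ha
      exact hA _ ha b hb.1 (by simpa using hz)
    have h3 := hbound g _ _ h1 hBsub (h2.mono_right Set.inter_subset_left)
    rw [Set.ncard_image_of_injective _ sub_right_injective] at h3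
    omega
  -- g ∉ H
  have hgH : g ∉ H := by
    intro hg
    have hBne : B.Nonempty := by
      rw [← Set.ncard_pos (Set.toFinite B)]
      have : 0 < Nat.card H := Nat.card_pos
      omega
    obtain ⟨z, hz⟩ := hBne
    obtain ⟨h, hh, rfl⟩ := hBsub hz
    exact key0 _ hz.1 (by simpa [vadd_eq_add] using add_mem hg hh)
  -- quotient facts
  set q : (Fin n → ZMod 5) ⧸ H := QuotientAddGroup.mk g with hqdef
  have h5 : (5 : ℤ) • q = 0 := by
    have h5g : (5 : ℤ) • g = 0 := by
      funext i
      show (5 : ℤ) • g i = 0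
      have hcast : ((5 : ℕ) : ℤ) • g i = (5 : ℕ) • g i := natCast_zsmul _ _
      rw [show ((5 : ℤ)) = ((5 : ℕ) : ℤ) by norm_num, hcast]
      have hall : ∀ a : ZMod 5, 5 • a = 0 := by decide
      exact hall (g i)
    rw [hqdef, ← QuotientAddGroup.mk_zsmul, h5g, QuotientAddGroup.mk_zero]
  have htop : ∀ x : Fin n → ZMod 5, (QuotientAddGroup.mk x : (Fin n → ZMod 5) ⧸ H) ∈
      AddSubgroup.zmultiples q := by
    intro x
    set K := AddSubgroup.comap (QuotientAddGroup.mk' H) (AddSubgroup.zmultiples q) with hK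
    have hHK : H < K := by
      constructor
      · intro h hh
        show QuotientAddGroup.mk h ∈ AddSubgroup.zmultiples q
        rw [(QuotientAddGroup.eq_zero_iff h).2 hh]
        exact zero_mem _
      · intro hle
        exact hgH (hle (AddSubgroup.mem_zmultiples q))
    have : K = ⊤ := hH.2 K hHK
    have : x ∈ K := this ▸ AddSubgroup.mem_top x
    exact this
  -- the image is contained in {q, 3q, 4q}
  have hsub : (QuotientAddGroup.mk '' A : Set ((Fin n → ZMod 5) ⧸ H)) ⊆
      {q, (3 : ℤ) • q, (4 : ℤ) • q} := by
    rintro _ ⟨z, hz, rfl⟩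
    obtain ⟨k, hk⟩ := htop z
    have hk' : k • q = QuotientAddGroup.mk z := hk
    have hred : (QuotientAddGroup.mk z : (Fin n → ZMod 5) ⧸ H) = (k % 5) • q := by
      rw [← hk']
      conv_lhs => rw [← Int.emod_add_mul_ediv k 5]
      rw [add_zsmul, mul_comm, mul_zsmul, h5, smul_zero, add_zero]
    have h0 : 0 ≤ k % 5 := Int.emod_nonneg k (by norm_num)
    have h4 : k % 5 < 5 := Int.emod_lt_of_pos k (by norm_num)
    set m := k % 5 with hm
    interval_cases m
    · exfalso
      apply key0 z hz
      have : QuotientAddGroup.mk (s := H) z = 0 := by rw [hred]; simp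
      exact (QuotientAddGroup.eq_zero_iff z).1 this
    · exact Or.inl (by rw [hred, one_smul])
    · exfalso
      apply key2 z hz
      have : QuotientAddGroup.mk (s := H) (z - g - g) = 0 := by
        rw [QuotientAddGroup.mk_sub, QuotientAddGroup.mk_sub, hred, ← hqdef]
        have h2q : (2 : ℤ) • q = q + q := two_zsmul q
        rw [h2q]; abel
      exact (QuotientAddGroup.eq_zero_iff _).1 this
    · exact Or.inr (Or.inl hred)
    · exact Or.inr (Or.inr hred)
  calc (QuotientAddGroup.mk '' A : Set ((Fin n → ZMod 5) ⧸ H)).ncard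
      ≤ ({q, (3 : ℤ) • q, (4 : ℤ) • q} : Set ((Fin n → ZMod 5) ⧸ H)).ncard :=
        Set.ncard_le_ncard hsub (Set.toFinite _)
    _ ≤ 3 := by
        refine (Set.ncard_insert_le _ _).trans ?_
        have := Set.ncard_insert_le ((3 : ℤ) • q) ({(4 : ℤ) • q} : Set ((Fin n → ZMod 5) ⧸ H))
        simp only [Set.ncard_singleton] at this ⊢
        omega
end

section
/- Let n ≥ 1 and let A, B, C ⊆ (ℤ/5ℤ)^n with (A + B) ∩ C = ∅, C ≠ ∅, and min{|A|, |B|} > 2·5^(n-1). Then |A| + |B| + 2|C| ≤ 6·5^(n-1). -/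
open Finset Pointwise

namespace Hami

variable {G : Type*} [AddCommGroup G] [Fintype G] [DecidableEq G]

/-- The cost (boundary size) of `X` w.r.t. `B`. -/
def cost (B X : Finset G) : ℤ := ((X + B).card : ℤ) - (X.card : ℤ)

/-- Candidates: nonempty sets whose sumset with `B` is not everything. -/
def candF (B : Finset G) : Finset (Finset G) :=
  univ.filter fun X => X.Nonempty ∧ (X + B).card < Fintype.card G

lemma mem_candF {B X : Finset G} :
    X ∈ candF B ↔ X.Nonempty ∧ (X + B).card < Fintype.card G := by
  simp [candF]

/-- The connectivity: minimum cost over candidates. -/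
noncomputable def kap (B : Finset G) (h : (candF B).Nonempty) : ℤ :=
  ((candF B).image (cost B)).min' (h.image _)

lemma kap_le {B X : Finset G} (h : (candF B).Nonempty) (hX : X ∈ candF B) :
    kap B h ≤ cost B X :=
  min'_le _ _ (mem_image_of_mem _ hX)

lemma exists_fragment {B : Finset G} (h : (candF B).Nonempty) :
    ∃ X ∈ candF B, cost B X = kap B h := by
  obtain ⟨X, hX, hc⟩ := mem_image.1 (min'_mem _ (h.image (cost B)))
  exact ⟨X, hX, hc⟩

/-- submodularity -/
lemma submod (B X Y : Finset G) :
    (((X ∪ Y) + B).card : ℤ) + ((X ∩ Y) + B).card ≤ ((X + B).card : ℤ) + (Y + B).card := by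
  have h1 : (X ∪ Y) + B = (X + B) ∪ (Y + B) := union_add
  have h2 : (X ∩ Y) + B ⊆ (X + B) ∩ (Y + B) := inter_add_subset
  have h3 : ((X + B) ∪ (Y + B)).card + ((X + B) ∩ (Y + B)).card
      = (X + B).card + (Y + B).card := card_union_add_card_inter _ _
  have h4 : ((X ∩ Y) + B).card ≤ ((X + B) ∩ (Y + B)).card := card_le_card h2
  rw [h1]
  push_cast
  omega

/-- duality: the complement of `X + B` is a candidate for `-B` with no larger cost. -/
lemma dual {B X : Finset G} (hX : X ∈ candF B) :
    (X + B)ᶜ ∈ candF (-B) ∧ cost (-B) (X + B)ᶜ ≤ cost B X := by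
  obtain ⟨hXne, hXlt⟩ := mem_candF.1 hX
  have hYcard : ((X + B)ᶜ).card = Fintype.card G - (X + B).card := card_compl _
  have hYne : ((X + B)ᶜ).Nonempty := by
    rw [← card_pos, hYcard]; omega
  have hsub : (X + B)ᶜ + (-B) ⊆ Xᶜ := by
    intro z hz
    obtain ⟨y, hy, w, hw, rfl⟩ := mem_add.1 hz
    obtain ⟨b, hb, rfl⟩ := mem_neg.1 hw
    simp only [mem_compl] at hy ⊢
    intro hzx
    exact hy (mem_add.2 ⟨y + -b, hzx, b, hb, by abel⟩)
  have hle : ((X + B)ᶜ + -B).card ≤ Fintype.card G - X.card := by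
    have := card_le_card hsub
    rwa [card_compl] at this
  have hXcard : 0 < X.card := hXne.card_pos
  have hcardle : (X + B).card ≤ Fintype.card G := by
    simpa using card_le_card ((X + B).subset_univ)
  constructor
  · exact mem_candF.2 ⟨hYne, by omega⟩
  · unfold cost
    have h1 : ((X + B)ᶜ + -B).card ≤ Fintype.card G - X.card := hle
    have hXle : X.card ≤ Fintype.card G := by simpa using card_le_card X.subset_univ
    rw [hYcard]
    push_cast [Nat.cast_sub hXle, Nat.cast_sub hcardle]
    omega

lemma candF_neg_nonempty {B : Finset G} (h : (candF B).Nonempty) :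
    (candF (-B)).Nonempty := by
  obtain ⟨X, hX⟩ := h
  exact ⟨_, (dual hX).1⟩

lemma kap_neg_le {B : Finset G} (h : (candF B).Nonempty) :
    kap (-B) (candF_neg_nonempty h) ≤ kap B h := by
  obtain ⟨X, hX, hc⟩ := exists_fragment h
  calc kap (-B) (candF_neg_nonempty h) ≤ cost (-B) (X + B)ᶜ := kap_le _ (dual hX).1
    _ ≤ cost B X := (dual hX).2
    _ = kap B h := hc

lemma kap_congr {B C : Finset G} (e : B = C) (hB : (candF B).Nonempty)
    (hC : (candF C).Nonempty) : kap B hB = kap C hC := by subst e; rfl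

lemma kap_neg_eq {B : Finset G} (h : (candF B).Nonempty) :
    kap (-B) (candF_neg_nonempty h) = kap B h := by
  refine le_antisymm (kap_neg_le h) ?_
  have h2 := kap_neg_le (candF_neg_nonempty h)
  rwa [kap_congr (neg_neg B) (candF_neg_nonempty (candF_neg_nonempty h)) h] at h2



/-- being a minimal-size fragment -/
def IsAtom' (B : Finset G) (h : (candF B).Nonempty) (P : Finset G) : Prop :=
  P ∈ candF B ∧ cost B P = kap B h ∧
    ∀ Q ∈ candF B, cost B Q = kap B h → P.card ≤ Q.card

lemma exists_atom {B : Finset G} (h : (candF B).Nonempty) : ∃ P, IsAtom' B h P := by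
  classical
  obtain ⟨X0, hX0, hc0⟩ := exists_fragment h
  have hne : ((candF B).filter fun X => cost B X = kap B h).Nonempty :=
    ⟨X0, mem_filter.2 ⟨hX0, hc0⟩⟩
  obtain ⟨P, hP, hmin⟩ := Finset.exists_min_image _ Finset.card hne
  rw [mem_filter] at hP
  exact ⟨P, hP.1, hP.2, fun Q hQ hcQ => hmin Q (mem_filter.2 ⟨hQ, hcQ⟩)⟩

/-- translation preserves everything -/
lemma translate_add (X B : Finset G) (g : G) : (X + {g}) + B = (X + B) + {g} := by
  rw [add_right_comm]

lemma card_translate (X : Finset G) (g : G) : (X + {g}).card = X.card := by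
  rw [add_singleton]
  exact card_image_of_injective _ (add_left_injective g)

lemma cost_translate (B X : Finset G) (g : G) : cost B (X + {g}) = cost B X := by
  unfold cost
  rw [translate_add, card_translate, card_translate]

lemma candF_translate {B X : Finset G} (g : G) (hX : X ∈ candF B) : X + {g} ∈ candF B := by
  rw [mem_candF] at hX ⊢
  refine ⟨hX.1.add ⟨g, mem_singleton_self g⟩, ?_⟩
  rw [translate_add, card_translate]
  exact hX.2

lemma atom_translate {B P : Finset G} {h} (g : G) (hP : IsAtom' B h P) :
    IsAtom' B h (P + {g}) := by
  obtain ⟨h1, h2, h3⟩ := hP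
  refine ⟨candF_translate g h1, by rwa [cost_translate], fun Q hQ hcQ => ?_⟩
  rw [card_translate]
  exact h3 Q hQ hcQ

/-- Two atoms (on the side with the smaller atoms) are equal or disjoint. -/
lemma atom_eq_or_disjoint {σ : Finset G} {h : (candF σ).Nonempty} {P Q : Finset G}
    (hP : IsAtom' σ h P) (hQ : IsAtom' σ h Q)
    (hside : ∀ R, IsAtom' (-σ) (candF_neg_nonempty h) R → P.card ≤ R.card) :
    P = Q ∨ P ∩ Q = ∅ := by
  by_contra hcon
  push_neg at hcon
  obtain ⟨hPQ, hZ⟩ := hcon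
  set Z := P ∩ Q with hZdef
  have hZne : Z.Nonempty := hZ
  obtain ⟨hPc, hPcost, hPmin⟩ := hP
  obtain ⟨hQc, hQcost, hQmin⟩ := hQ
  have hcards : P.card = Q.card := le_antisymm (hPmin Q hQc hQcost) (hQmin P hPc hPcost)
  -- Z is a proper subset of P or Q; wlog handle via cards
  have hZP : Z ⊆ P := inter_subset_left
  have hZlt : Z.card < P.card := by
    rcases lt_or_eq_of_le (card_le_card hZP) with hlt | heq
    · exact hlt
    · exfalso
      have : Z = P := eq_of_subset_of_card_le hZP (le_of_eq heq.symm)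
      -- then P ⊆ Q, and P.card = Q.card gives P = Q
      have hPsubQ : P ⊆ Q := by rw [← this]; exact inter_subset_right
      exact hPQ (eq_of_subset_of_card_le hPsubQ (le_of_eq hcards.symm))
  have hZcand : Z ∈ candF σ := by
    rw [mem_candF]
    refine ⟨hZne, lt_of_le_of_lt (card_le_card (add_subset_add_right hZP)) (mem_candF.1 hPc).2⟩
  have hZcost : kap σ h ≤ cost σ Z := kap_le h hZcand
  have hPone : (1 : ℤ) ≤ (Z.card : ℤ) := by exact_mod_cast hZne.card_pos
  have e1 := submod σ P Q
  have e2 : (P ∪ Q).card + Z.card = P.card + Q.card := card_union_add_card_inter P Q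
  have hcP : ((P + σ).card : ℤ) = P.card + kap σ h := by unfold cost at hPcost; linarith
  have hcQ : ((Q + σ).card : ℤ) = Q.card + kap σ h := by unfold cost at hQcost; linarith
  have hcZ : (Z.card : ℤ) + kap σ h ≤ ((Z + σ).card : ℤ) := by
    unfold cost at hZcost; linarith
  by_cases hU : ((P ∪ Q) + σ).card < Fintype.card G
  · -- easy case: union is a candidate
    have hUcand : (P ∪ Q) ∈ candF σ :=
      mem_candF.2 ⟨(mem_candF.1 hPc).1.inl, hU⟩
    have hUcost : kap σ h ≤ cost σ (P ∪ Q) := kap_le h hUcand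
    have hZeq : cost σ Z = kap σ h := by
      have e2' : ((P ∪ Q).card : ℤ) + (Z.card : ℤ) = (P.card : ℤ) + Q.card := by
        exact_mod_cast e2
      have hle : cost σ Z ≤ kap σ h := by unfold cost at hUcost ⊢; linarith
      exact le_antisymm hle hZcost
    have := hPmin Z hZcand hZeq
    omega
  · -- union covers the group
    push_neg at hU
    have hUcard : (Fintype.card G : ℤ) ≤ (((P ∪ Q) + σ).card : ℤ) := by exact_mod_cast hU
    -- dual fragment
    obtain ⟨hYcand, hYcost⟩ := dual hPc
    have hYlow : kap (-σ) (candF_neg_nonempty h) ≤ cost (-σ) (P + σ)ᶜ :=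
      kap_le _ hYcand
    have hYeq : cost (-σ) (P + σ)ᶜ = kap (-σ) (candF_neg_nonempty h) := by
      have := kap_neg_eq h
      rw [this]
      exact le_antisymm (le_trans hYcost (le_of_eq hPcost)) (by rw [← this] at hPcost ⊢; linarith)
    obtain ⟨R0, hR0⟩ := exists_atom (candF_neg_nonempty h)
    have hR0Y : R0.card ≤ ((P + σ)ᶜ).card := hR0.2.2 _ hYcand hYeq
    have hPR0 : P.card ≤ R0.card := hside R0 hR0
    have hYc : ((P + σ)ᶜ).card = Fintype.card G - (P + σ).card := card_compl _
    have hPsle : (P + σ).card ≤ Fintype.card G := by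
      simpa using card_le_card ((P + σ).subset_univ)
    have hYc' : (((P + σ)ᶜ).card : ℤ) = (Fintype.card G : ℤ) - ((P + σ).card : ℤ) := by
      rw [hYc]; push_cast [Nat.cast_sub hPsle]; ring
    have e2' : ((P ∪ Q).card : ℤ) + (Z.card : ℤ) = (P.card : ℤ) + Q.card := by
      exact_mod_cast e2
    have hPcards : (P.card : ℤ) = Q.card := by exact_mod_cast hcards
    have hPY : (P.card : ℤ) ≤ ((P + σ)ᶜ).card := by
      exact_mod_cast le_trans hPR0 hR0Y
    linarith


lemma isAtom'_congr {B C P : Finset G} (e : B = C) (hB : (candF B).Nonempty)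
    (hC : (candF C).Nonempty) : IsAtom' B hB P ↔ IsAtom' C hC P := by
  subst e; exact Iff.rfl

lemma atom_subgroup {σ : Finset G} {h : (candF σ).Nonempty} {P : Finset G}
    (hP : IsAtom' σ h P)
    (hside : ∀ R, IsAtom' (-σ) (candF_neg_nonempty h) R → P.card ≤ R.card) :
    ∃ (H : AddSubgroup G) (P' : Finset G), (↑P' : Set G) = ↑H ∧
      cost σ P' = kap σ h ∧ (P' + σ).card < Fintype.card G := by
  obtain ⟨p0, hp0⟩ := (mem_candF.1 hP.1).1
  set P' := P + ({-p0} : Finset G) with hP'def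
  have hP' : IsAtom' σ h P' := atom_translate _ hP
  have h0 : (0 : G) ∈ P' :=
    mem_add.2 ⟨p0, hp0, -p0, mem_singleton_self _, add_neg_cancel p0⟩
  have hside' : ∀ R, IsAtom' (-σ) (candF_neg_nonempty h) R → P'.card ≤ R.card := by
    intro R hR
    rw [hP'def, card_translate]
    exact hside R hR
  have htraneq : ∀ g ∈ P', P' + {-g} = P' := by
    intro g hg
    have hPg : IsAtom' σ h (P' + {-g}) := atom_translate _ hP'
    have hsideg : ∀ R, IsAtom' (-σ) (candF_neg_nonempty h) R → (P' + {-g}).card ≤ R.card := by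
      intro R hR; rw [card_translate]; exact hside' R hR
    have h0g : (0 : G) ∈ P' + {-g} :=
      mem_add.2 ⟨g, hg, -g, mem_singleton_self _, add_neg_cancel g⟩
    rcases atom_eq_or_disjoint hPg hP' hsideg with he | hd
    · exact he
    · exfalso
      have : (0 : G) ∈ (P' + {-g}) ∩ P' := mem_inter.2 ⟨h0g, h0⟩
      rw [hd] at this
      exact notMem_empty _ this
  have hsubmem : ∀ g ∈ P', ∀ x ∈ P', x - g ∈ P' := by
    intro g hg x hx
    have : x - g ∈ P' + {-g} :=
      mem_add.2 ⟨x, hx, -g, mem_singleton_self _, by abel⟩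
    rwa [htraneq g hg] at this
  have hneg : ∀ x ∈ P', -x ∈ P' := by
    intro x hx
    have := hsubmem x hx 0 h0
    simpa using this
  have hadd : ∀ x ∈ P', ∀ y ∈ P', x + y ∈ P' := by
    intro x hx y hy
    have := hsubmem (-y) (hneg y hy) x hx
    simpa [sub_neg_eq_add] using this
  refine ⟨{ carrier := ↑P'
            add_mem' := fun {a b} ha hb => hadd a (mem_coe.1 ha) b (mem_coe.1 hb)
            zero_mem' := mem_coe.2 h0
            neg_mem' := fun {a} ha => hneg a (mem_coe.1 ha) }, P', rfl, hP'.2.1,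
    (mem_candF.1 hP'.1).2⟩

theorem exists_subgroup {B : Finset G} (h : (candF B).Nonempty) :
    ∃ (H : AddSubgroup G) (P C : Finset G), (↑P : Set G) = ↑H ∧ C.card = B.card ∧
      (P + C).card < Fintype.card G ∧ (kap B h : ℤ) = ((P + C).card : ℤ) - P.card := by
  have h' : (candF (-B)).Nonempty := candF_neg_nonempty h
  obtain ⟨P1, hP1⟩ := exists_atom h
  obtain ⟨P2, hP2⟩ := exists_atom h'
  by_cases hc : P1.card ≤ P2.card
  · have hside : ∀ R, IsAtom' (-B) (candF_neg_nonempty h) R → P1.card ≤ R.card := by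
      intro R hR
      exact le_trans hc (hP2.2.2 R hR.1 hR.2.1)
    obtain ⟨H, P', hcoe, hcost, hlt⟩ := atom_subgroup hP1 hside
    exact ⟨H, P', B, hcoe, rfl, hlt, by unfold cost at hcost; linarith [hcost]⟩
  · push_neg at hc
    have hside : ∀ R, IsAtom' (-(-B)) (candF_neg_nonempty h') R → P2.card ≤ R.card := by
      intro R hR
      have hRB : IsAtom' B h R := (isAtom'_congr (neg_neg B) _ h).1 hR
      exact le_trans hc.le (hP1.2.2 R hRB.1 hRB.2.1)
    obtain ⟨H, P', hcoe, hcost, hlt⟩ := atom_subgroup hP2 hside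
    refine ⟨H, P', -B, hcoe, card_neg _, hlt, ?_⟩
    have : kap (-B) h' = kap B h := kap_neg_eq h
    rw [← this]
    unfold cost at hcost
    linarith [hcost]

-- ### counting lemma
lemma subgroup_add_card (H : AddSubgroup G) (P C : Finset G) (hcoe : (↑P : Set G) = ↑H)
    (hC : C.Nonempty) :
    ∃ m : ℕ, 1 ≤ m ∧ (P + C).card = m * P.card ∧ C.card ≤ m * P.card := by
  classical
  set π : G → G ⧸ H := QuotientAddGroup.mk with hπ
  set Q : Set (G ⧸ H) := π '' ↑C with hQ
  have hmem : ∀ x : G, x ∈ P + C ↔ π x ∈ Q := by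
    intro x
    constructor
    · rintro hx
      obtain ⟨p, hp, c, hc, rfl⟩ := mem_add.1 hx
      refine ⟨c, hc, ?_⟩
      have hpH : p ∈ H := by rw [← SetLike.mem_coe, ← hcoe]; exact mem_coe.2 hp
      have : (c : G ⧸ H) = (p + c : G) := by
        rw [QuotientAddGroup.eq_iff_sub_mem]
        simpa using H.neg_mem hpH
      exact this
    · rintro ⟨c, hc, hcx⟩
      have hxc : x - c ∈ H := by
        rw [← QuotientAddGroup.eq_iff_sub_mem]
        exact hcx.symm
      have hxP : x - c ∈ P := by
        rw [← mem_coe, hcoe]; exact hxc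
      exact mem_add.2 ⟨x - c, hxP, c, hc, by abel⟩
  have hset : (↑(P + C) : Set G) = π ⁻¹' Q := by
    ext x
    simp only [Finset.mem_coe, Set.mem_preimage]
    exact hmem x
  have hPcard : Nat.card (↥(↑H : Set G)) = P.card := by
    rw [← hcoe]
    rw [Nat.card_coe_set_eq, Set.ncard_coe_finset]
  have hkey : (P + C).card = Nat.card Q * P.card := by
    have h1 : (P + C).card = (↑(P + C) : Set G).ncard := (Set.ncard_coe_finset _).symm
    rw [h1, hset, ← Nat.card_coe_set_eq,
      Nat.card_congr (QuotientAddGroup.preimageMkEquivAddSubgroupProdSet H Q),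
      Nat.card_prod]
    rw [show Nat.card ↥H = Nat.card (↥(↑H : Set G)) from rfl, hPcard, mul_comm]
  refine ⟨Nat.card Q, ?_, hkey, ?_⟩
  · have hQne : Q.Nonempty := ⟨π hC.choose, hC.choose, hC.choose_spec, rfl⟩
    have : Nat.card Q ≠ 0 := Nat.card_ne_zero.2 ⟨hQne.to_subtype, Set.toFinite Q⟩
    omega
  · have hsub : (↑C : Set G) ⊆ π ⁻¹' Q := by
      intro x hx
      exact ⟨x, hx, rfl⟩
    have := Set.ncard_le_ncard hsub (Set.toFinite _)
    rw [Set.ncard_coe_finset] at this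
    rw [← hset, Set.ncard_coe_finset] at this
    omega

-- ### the density bound
theorem add_card_ge {n : ℕ} (hn : 1 ≤ n) (A B : Finset (Fin n → ZMod 5))
    (hA : A.Nonempty) (hB : 2 * 5 ^ (n - 1) < B.card) (hne : A + B ≠ univ) :
    A.card + 2 * 5 ^ (n - 1) ≤ (A + B).card := by
  have hcardG : Fintype.card (Fin n → ZMod 5) = 5 ^ n := by
    rw [Fintype.card_fun, ZMod.card, Fintype.card_fin]
  have hAcand : A ∈ candF B := by
    rw [mem_candF]
    refine ⟨hA, ?_⟩
    rw [← card_univ]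
    exact card_lt_card (Finset.ssubset_univ_iff.2 hne)
  have hcne : (candF B).Nonempty := ⟨A, hAcand⟩
  have hkapA : kap B hcne ≤ cost B A := kap_le hcne hAcand
  -- kap is at least 2 * 5^(n-1)
  have hkap : (2 * 5 ^ (n - 1) : ℤ) ≤ kap B hcne := by
    obtain ⟨H, P, C, hcoe, hCB, hlt, hkapeq⟩ := exists_subgroup hcne
    have hCne : C.Nonempty := by
      rw [← card_pos, hCB]; omega
    obtain ⟨m, hm1, hmcard, hmle⟩ := subgroup_add_card H P C hcoe hCne
    -- P.card is a power of 5
    have hPdvd : P.card ∣ 5 ^ n := by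
      have h1 : Nat.card H ∣ Nat.card (Fin n → ZMod 5) := AddSubgroup.card_addSubgroup_dvd_card H
      have h2 : Nat.card H = P.card := by
        rw [show Nat.card ↥H = Nat.card (↥((H : Set (Fin n → ZMod 5)))) from rfl, ← hcoe,
          Nat.card_coe_set_eq, Set.ncard_coe_finset]
      rwa [h2, Nat.card_eq_fintype_card, hcardG] at h1
    obtain ⟨t, htn, hPt⟩ := (Nat.dvd_prime_pow Nat.prime_five).1 hPdvd
    have hmP : m * P.card < 5 ^ n := by rw [← hmcard, ← hcardG]; exact hlt
    have htn' : t ≤ n - 1 := by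
      rcases Nat.lt_or_ge t n with h | h
      · omega
      · exfalso
        have : 5 ^ n ≤ m * P.card := by
          calc 5 ^ n ≤ 5 ^ t := Nat.pow_le_pow_right (by norm_num) h
          _ = P.card := hPt.symm
          _ ≤ m * P.card := Nat.le_mul_of_pos_left _ hm1
        omega
    have hPdvd2 : P.card ∣ 2 * 5 ^ (n - 1) :=
      Dvd.dvd.mul_left (hPt ▸ pow_dvd_pow 5 htn') 2
    obtain ⟨k, hk⟩ := hPdvd2
    have hPpos : 0 < P.card := by rw [hPt]; positivity
    have hBC : 2 * 5 ^ (n - 1) < m * P.card := by omega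
    have hkm : P.card * k < P.card * m := by
      rw [← hk]; rw [mul_comm P.card m]; exact hBC
    have : k < m := lt_of_mul_lt_mul_left hkm (le_of_lt hPpos)
    have hge : 2 * 5 ^ (n - 1) + P.card ≤ m * P.card := by
      calc 2 * 5 ^ (n - 1) + P.card = P.card * (k + 1) := by rw [hk]; ring
      _ ≤ P.card * m := Nat.mul_le_mul_left _ (by omega)
      _ = m * P.card := mul_comm _ _
    rw [hkapeq, hmcard]
    have : ((2 * 5 ^ (n - 1) + P.card : ℕ) : ℤ) ≤ ((m * P.card : ℕ) : ℤ) := by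
      exact_mod_cast hge
    push_cast at this ⊢
    linarith
  have := le_trans hkap hkapA
  unfold cost at this
  have hfin : (A.card : ℤ) + 2 * 5 ^ (n - 1) ≤ ((A + B).card : ℤ) := by linarith
  exact_mod_cast hfin


end Hami

open Hami in
theorem stmt_4 (n : ℕ) (hn : 1 ≤ n) (A B C : Set (Fin n → ZMod 5))
    (hAB : (A + B) ∩ C = ∅) (hC : C.Nonempty)
    (hAcard : A.ncard > 2 * 5 ^ (n - 1)) (hBcard : B.ncard > 2 * 5 ^ (n - 1)) :
    A.ncard + B.ncard + 2 * C.ncard ≤ 6 * 5 ^ (n - 1) := by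
  classical
  have hcardG : Fintype.card (Fin n → ZMod 5) = 5 ^ n := by
    rw [Fintype.card_fun, ZMod.card, Fintype.card_fin]
  set A' := (Set.toFinite A).toFinset with hA'
  set B' := (Set.toFinite B).toFinset with hB'
  set C' := (Set.toFinite C).toFinset with hC'
  have hAn : A.ncard = A'.card := Set.ncard_eq_toFinset_card A (Set.toFinite A)
  have hBn : B.ncard = B'.card := Set.ncard_eq_toFinset_card B (Set.toFinite B)
  have hCn : C.ncard = C'.card := Set.ncard_eq_toFinset_card C (Set.toFinite C)
  have hsum : ∀ x : Fin n → ZMod 5, x ∈ A' + B' ↔ x ∈ A + B := by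
    intro x
    rw [Finset.mem_add]
    rw [Set.mem_add]
    constructor
    · rintro ⟨a, ha, b, hb, rfl⟩
      exact ⟨a, (Set.Finite.mem_toFinset _).1 ha, b, (Set.Finite.mem_toFinset _).1 hb, rfl⟩
    · rintro ⟨a, ha, b, hb, rfl⟩
      exact ⟨a, (Set.Finite.mem_toFinset _).2 ha, b, (Set.Finite.mem_toFinset _).2 hb, rfl⟩
  -- C' is disjoint from A' + B'
  have hdisj : Disjoint (A' + B') C' := by
    rw [Finset.disjoint_iff_inter_eq_empty]
    ext x
    simp only [Finset.mem_inter, Finset.notMem_empty, iff_false]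
    rintro ⟨hx1, hx2⟩
    have hx1' : x ∈ A + B := (hsum x).1 hx1
    have hx2' : x ∈ C := (Set.Finite.mem_toFinset _).1 hx2
    have : x ∈ (A + B) ∩ C := ⟨hx1', hx2'⟩
    rw [hAB] at this
    exact this
  have hCne : C'.Nonempty := by
    obtain ⟨c, hc⟩ := hC
    exact ⟨c, (Set.Finite.mem_toFinset _).2 hc⟩
  have hne : A' + B' ≠ Finset.univ := by
    intro h
    obtain ⟨c, hc⟩ := hCne
    have : c ∈ A' + B' := h ▸ Finset.mem_univ c
    exact Finset.disjoint_left.1 hdisj this hc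
  have hAne : A'.Nonempty := by
    rw [← Finset.card_pos, ← hAn]; omega
  have hBne : B'.Nonempty := by
    rw [← Finset.card_pos, ← hBn]; omega
  have h1 : A'.card + 2 * 5 ^ (n - 1) ≤ (A' + B').card :=
    add_card_ge hn A' B' hAne (by omega) hne
  have h2 : B'.card + 2 * 5 ^ (n - 1) ≤ (A' + B').card := by
    rw [add_comm A' B'] at hne ⊢
    exact add_card_ge hn B' A' hBne (by omega) hne
  have h3 : (A' + B').card + C'.card ≤ 5 ^ n := by
    rw [← Finset.card_union_of_disjoint hdisj, ← hcardG, ← Finset.card_univ]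
    exact Finset.card_le_card (Finset.subset_univ _)
  have h5n : 5 ^ n = 5 * 5 ^ (n - 1) := by
    conv_lhs => rw [show n = (n - 1) + 1 by omega]
    rw [pow_succ]; ring
  omega
end

section
/- Let n ≥ 1 and let A ⊆ (ℤ/5ℤ)^n be sum-free with |A| > (3/2)·5^(n-1). If H < (ℤ/5ℤ)^n is a maximal proper subgroup such that every H-coset contains fewer than |H|/2 elements of A, then there is at most one H-coset containing more than (2/5)|H| elements of A. -/
set_option linter.unusedSectionVars false
set_option maxHeartbeats 1000000

open Pointwise



section Helpers

variable {G : Type*} [AddCommGroup G] [Fintype G]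

/-- fiber of the quotient map over the class of `g` is the coset `g + N`. -/
lemma fiber_eq (N : AddSubgroup G) (g : G) :
    (QuotientAddGroup.mk ⁻¹' {(g : G ⧸ N)} : Set G) = (g + ·) '' (N : Set G) := by
  ext x
  simp only [Set.mem_preimage, Set.mem_singleton_iff, Set.mem_image, SetLike.mem_coe]
  constructor
  · intro h
    have h' : -g + x ∈ N := by
      have := QuotientAddGroup.eq (s := N) (a := g) (b := x)
      exact this.mp h.symm
    exact ⟨-g + x, h', by abel⟩
  · rintro ⟨k, hk, rfl⟩
    have : ((g + k : G) : G ⧸ N) = (g : G ⧸ N) := by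
      refine (QuotientAddGroup.eq).mpr ?_
      have : -(g + k) + g = -k := by abel
      rw [this]
      exact neg_mem hk
    exact this

lemma ncard_coset (N : AddSubgroup G) (g : G) :
    ((g + ·) '' (N : Set G)).ncard = Nat.card N := by
  rw [Set.ncard_image_of_injective _ (add_right_injective g)]
  rw [← Nat.card_coe_set_eq]
  rfl

lemma fiber_ncard (N : AddSubgroup G) (q : G ⧸ N) :
    (QuotientAddGroup.mk ⁻¹' {q} : Set G).ncard = Nat.card N := by
  induction q using QuotientAddGroup.induction_on with
  | H g => rw [fiber_eq, ncard_coset]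

lemma mem_fiber_iff (N : AddSubgroup G) (q : G ⧸ N) (x : G) :
    x ∈ (QuotientAddGroup.mk ⁻¹' {q} : Set G) ↔ (x : G ⧸ N) = q := Iff.rfl

/-- partition of the cardinality of a set along fibers of the quotient map -/
lemma ncard_eq_sum_fibers (N : AddSubgroup G) (S : Set G) [Fintype (G ⧸ N)] :
    S.ncard = ∑ q : G ⧸ N, (S ∩ QuotientAddGroup.mk ⁻¹' {q}).ncard := by
  classical
  have hS : S.Finite := S.toFinite
  rw [Set.ncard_eq_toFinset_card S hS]
  rw [Finset.card_eq_sum_card_fiberwise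
    (f := fun a => (QuotientAddGroup.mk a : G ⧸ N)) (t := Finset.univ)
    (fun x _ => Finset.mem_univ _)]
  refine Finset.sum_congr rfl fun q _ => ?_
  have h2 : (S ∩ QuotientAddGroup.mk ⁻¹' {q}).Finite := (S ∩ _).toFinite
  rw [Set.ncard_eq_toFinset_card _ h2]
  congr 1
  ext x
  simp only [Set.Finite.mem_toFinset, Finset.mem_filter, Set.Finite.mem_toFinset hS]
  exact Iff.rfl

end Helpers

section Stable
variable {G : Type*} [AddCommGroup G] [Fintype G]

/-- if D is K-stable, a nonempty fiber-slice of D is the whole fiber -/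
lemma stable_slice_full (K : AddSubgroup G) (D : Set G)
    (h : ∀ d ∈ D, ∀ k ∈ K, d + k ∈ D) (q : G ⧸ K)
    (hne : (D ∩ QuotientAddGroup.mk ⁻¹' {q}).Nonempty) :
    D ∩ QuotientAddGroup.mk ⁻¹' {q} = QuotientAddGroup.mk ⁻¹' {q} := by
  obtain ⟨d, hdD, hdq⟩ := hne
  refine Set.eq_of_subset_of_ncard_le (Set.inter_subset_right) ?_ (Set.toFinite _)
  have : (QuotientAddGroup.mk ⁻¹' {q} : Set G) ⊆ D ∩ QuotientAddGroup.mk ⁻¹' {q} := by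
    intro x hx
    refine ⟨?_, hx⟩
    have hxq : (x : G ⧸ K) = q := hx
    have hdq' : (d : G ⧸ K) = q := hdq
    have : -d + x ∈ K := by
      rw [← QuotientAddGroup.eq (s := K)]
      rw [hdq', hxq]
    have := h d hdD _ this
    simpa using this
  exact Set.ncard_le_ncard this (Set.toFinite _)

open scoped Classical in
lemma stable_ncard_eq (K : AddSubgroup G) (D : Set G)
    (h : ∀ d ∈ D, ∀ k ∈ K, d + k ∈ D) [Fintype (G ⧸ K)] :
    D.ncard = (Finset.univ.filter
      (fun q : G ⧸ K => (D ∩ QuotientAddGroup.mk ⁻¹' {q}).Nonempty)).card * Nat.card K := by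
  classical
  rw [ncard_eq_sum_fibers K D]
  rw [← Finset.sum_filter_add_sum_filter_not Finset.univ
    (fun q : G ⧸ K => (D ∩ QuotientAddGroup.mk ⁻¹' {q}).Nonempty)]
  have h2 : ∀ q ∈ Finset.univ.filter
      (fun q : G ⧸ K => ¬(D ∩ QuotientAddGroup.mk ⁻¹' {q}).Nonempty),
      (D ∩ QuotientAddGroup.mk ⁻¹' {q}).ncard = 0 := by
    intro q hq
    simp only [Finset.mem_filter, Set.not_nonempty_iff_eq_empty] at hq
    rw [hq.2, Set.ncard_empty]
  rw [Finset.sum_congr rfl h2, Finset.sum_const_zero, add_zero]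
  have h3 : ∀ q ∈ Finset.univ.filter
      (fun q : G ⧸ K => (D ∩ QuotientAddGroup.mk ⁻¹' {q}).Nonempty),
      (D ∩ QuotientAddGroup.mk ⁻¹' {q}).ncard = Nat.card K := by
    intro q hq
    simp only [Finset.mem_filter] at hq
    rw [stable_slice_full K D h q hq.2, fiber_ncard]
  rw [Finset.sum_congr rfl h3, Finset.sum_const, smul_eq_mul]

lemma stable_dvd (K : AddSubgroup G) (D : Set G)
    (h : ∀ d ∈ D, ∀ k ∈ K, d + k ∈ D) : Nat.card K ∣ D.ncard := by
  classical
  letI : Fintype (G ⧸ K) := Fintype.ofFinite _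
  rw [stable_ncard_eq K D h]
  exact Dvd.intro_left _ rfl
end Stable

section Transform
variable {G : Type*} [AddCommGroup G] [Fintype G]

lemma transform_aux (N : ℕ) : ∀ X Y : Set G, Y.ncard ≤ N → X.Nonempty → Y.Nonempty →
    ∃ (K : AddSubgroup G) (D : Set G), K ≤ AddSubgroup.closure (Y - Y) ∧
      D ⊆ X + Y ∧ D.Nonempty ∧ (∀ d ∈ D, ∀ k ∈ K, d + k ∈ D) ∧
      X.ncard + Y.ncard ≤ D.ncard + Nat.card K := by
  induction N with
  | zero =>
    intro X Y hYle hXne hYne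
    exfalso
    have := (Set.ncard_pos (Set.toFinite Y)).mpr hYne
    omega
  | succ N ih =>
    intro X Y hYle hXne hYne
    by_cases hstab : ∀ x ∈ X, ∀ y ∈ Y, ∀ y' ∈ Y, x + y' - y ∈ X
    · -- terminal case
      refine ⟨AddSubgroup.closure (Y - Y), (fun x => x + hYne.choose) '' X, le_rfl, ?_, ?_, ?_, ?_⟩
      · rintro _ ⟨x, hx, rfl⟩
        exact Set.add_mem_add hx hYne.choose_spec
      · exact hXne.image _
      · have key : ∀ k (_ : k ∈ AddSubgroup.closure (Y - Y)), ∀ x ∈ X, x + k ∈ X := by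
          intro k hk
          induction hk using AddSubgroup.closure_induction with
          | mem z hz =>
            intro x hx
            obtain ⟨a, ha, b, hb, rfl⟩ := Set.mem_sub.mp hz
            have : x + (a - b) = x + a - b := by abel
            rw [this]
            exact hstab x hx b hb a ha
          | zero => intro x hx; simpa using hx
          | add z w _ _ hz hw =>
            intro x hx
            have : x + (z + w) = (x + z) + w := by abel
            rw [this]
            exact hw _ (hz x hx)
          | neg z _ hz =>
            intro x hx
            have himg : (fun w => w + z) '' X ⊆ X := by
              rintro _ ⟨w, hw, rfl⟩; exact hz w hw
            have heq : (fun w => w + z) '' X = X := by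
              refine Set.eq_of_subset_of_ncard_le himg ?_ (Set.toFinite _)
              rw [Set.ncard_image_of_injective _ (add_left_injective z)]
            rw [← heq] at hx
            obtain ⟨w, hw, hwx⟩ := hx
            have hwx' : w + z = x := hwx
            have : w = x + -z := by rw [← hwx']; abel
            rwa [← this]
        rintro _ ⟨x, hx, rfl⟩ k hk
        have : x + hYne.choose + k = (x + k) + hYne.choose := by abel
        rw [this]
        exact Set.mem_image_of_mem _ (key k hk x hx)
      · rw [Set.ncard_image_of_injective _ (add_left_injective _)]
        have hY : Y.ncard ≤ Nat.card (AddSubgroup.closure (Y - Y)) := by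
          have hsub : Y ⊆ (hYne.choose + ·) '' (AddSubgroup.closure (Y - Y) : Set G) := by
            intro y hy
            refine ⟨y - hYne.choose, ?_, by show hYne.choose + (y - hYne.choose) = y; abel⟩
            exact AddSubgroup.subset_closure (Set.sub_mem_sub hy hYne.choose_spec)
          calc Y.ncard ≤ _ := Set.ncard_le_ncard hsub (Set.toFinite _)
            _ = _ := ncard_coset _ _
        omega
    · -- transform step
      push_neg at hstab
      obtain ⟨x₀, hx₀, y₀, hy₀, y₁, hy₁, hout⟩ := hstab
      set f : G → G := fun y => (x₀ - y₀) + y with hf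
      set Z : Set G := f '' Y with hZ
      set X' : Set G := X ∪ Z with hX'
      set Y' : Set G := Y ∩ f ⁻¹' X with hY'
      have hY'sub : Y' ⊆ Y := Set.inter_subset_left
      have hfy₀ : f y₀ = x₀ := by show x₀ - y₀ + y₀ = x₀; abel
      have hy₀' : y₀ ∈ Y' := by
        refine ⟨hy₀, ?_⟩
        show f y₀ ∈ X
        rw [hfy₀]; exact hx₀
      have hy₁' : y₁ ∉ Y' := by
        rintro ⟨-, h⟩
        have hfy₁ : f y₁ = x₀ + y₁ - y₀ := by show x₀ - y₀ + y₁ = x₀ + y₁ - y₀; abel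
        rw [Set.mem_preimage, hfy₁] at h
        exact hout h
      have hss : Y' ⊂ Y := (Set.ssubset_iff_of_subset hY'sub).mpr ⟨y₁, hy₁, hy₁'⟩
      have hcard : Y'.ncard < Y.ncard := Set.ncard_lt_ncard hss (Set.toFinite _)
      have hX'ne : X'.Nonempty := hXne.mono Set.subset_union_left
      have hY'ne : Y'.Nonempty := ⟨y₀, hy₀'⟩
      have hXY' : X' + Y' ⊆ X + Y := by
        intro z hz
        rw [Set.mem_add] at hz
        obtain ⟨a, ha, b, hb, rfl⟩ := hz
        rcases ha with ha | ha
        · exact Set.add_mem_add ha (hY'sub hb)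
        · obtain ⟨y, hy, rfl⟩ := ha
          have hfb : f b ∈ X := hb.2
          have : f y + b = f b + y := by show x₀ - y₀ + y + b = x₀ - y₀ + b + y; abel
          rw [this]
          exact Set.add_mem_add hfb hy
      have hcnt : X.ncard + Y.ncard ≤ X'.ncard + Y'.ncard := by
        have h1 := Set.ncard_inter_add_ncard_union X Z (Set.toFinite _) (Set.toFinite _)
        rw [← hX'] at h1
        have himg : f '' Y' = X ∩ Z := by
          ext w
          constructor
          · rintro ⟨y, ⟨hyY, hyX⟩, rfl⟩
            exact ⟨hyX, Set.mem_image_of_mem _ hyY⟩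
          · rintro ⟨hwX, y, hy, rfl⟩
            exact Set.mem_image_of_mem _ ⟨hy, hwX⟩
        have h2 : (X ∩ Z).ncard = Y'.ncard := by
          rw [← himg, Set.ncard_image_of_injective _ (add_right_injective _)]
        have h3 : Z.ncard = Y.ncard := Set.ncard_image_of_injective _ (add_right_injective _)
        omega
      obtain ⟨K, D, hKle, hDsub, hDne, hDst, hbd⟩ :=
        ih X' Y' (by omega) hX'ne hY'ne
      refine ⟨K, D, ?_, hDsub.trans hXY', hDne, hDst, by omega⟩
      exact hKle.trans (AddSubgroup.closure_mono (Set.sub_subset_sub hY'sub hY'sub))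

lemma transform (X Y : Set G) (hXne : X.Nonempty) (hYne : Y.Nonempty) :
    ∃ (K : AddSubgroup G) (D : Set G), K ≤ AddSubgroup.closure (Y - Y) ∧
      D ⊆ X + Y ∧ D.Nonempty ∧ (∀ d ∈ D, ∀ k ∈ K, d + k ∈ D) ∧
      X.ncard + Y.ncard ≤ D.ncard + Nat.card K :=
  transform_aux Y.ncard X Y le_rfl hXne hYne

end Transform

section KeyPrelim
variable {G : Type*} [AddCommGroup G] [Fintype G]

lemma diff_subset_of_fiber (H : AddSubgroup G) (q : G ⧸ H) (Y : Set G)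
    (hY : Y ⊆ QuotientAddGroup.mk ⁻¹' {q}) : Y - Y ⊆ (H : Set G) := by
  intro z hz
  obtain ⟨a, ha, b, hb, rfl⟩ := Set.mem_sub.mp hz
  have ha' : (a : G ⧸ H) = q := hY ha
  have hb' : (b : G ⧸ H) = q := hY hb
  have : ((a - b : G) : G ⧸ H) = 0 := by
    rw [QuotientAddGroup.mk_sub, ha', hb', sub_self]
  exact (QuotientAddGroup.eq_zero_iff _).mp this

lemma add_subset_fiber (H : AddSubgroup G) (u v : G ⧸ H) (X Y : Set G)
    (hX : X ⊆ QuotientAddGroup.mk ⁻¹' {u}) (hY : Y ⊆ QuotientAddGroup.mk ⁻¹' {v}) :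
    X + Y ⊆ QuotientAddGroup.mk ⁻¹' {u + v} := by
  intro z hz
  obtain ⟨a, ha, b, hb, rfl⟩ := Set.mem_add.mp hz
  show ((a + b : G) : G ⧸ H) = u + v
  rw [QuotientAddGroup.mk_add]
  rw [show (a : G ⧸ H) = u from hX ha, show (b : G ⧸ H) = v from hY hb]

lemma fiber_stable (H K : AddSubgroup G) (hKH : K ≤ H) (q : G ⧸ H) :
    ∀ z ∈ (QuotientAddGroup.mk ⁻¹' {q} : Set G), ∀ k ∈ K, z + k ∈
      (QuotientAddGroup.mk ⁻¹' {q} : Set G) := by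
  intro z hz k hk
  show ((z + k : G) : G ⧸ H) = q
  rw [QuotientAddGroup.mk_add, (QuotientAddGroup.eq_zero_iff k).mpr (hKH hk), add_zero]
  exact hz

lemma disjoint_bound (F W D : Set G) (hW : W ⊆ F) (hD : D ⊆ F)
    (hdisj : ∀ z ∈ D, z ∉ W) : W.ncard + D.ncard ≤ F.ncard := by
  have hdis : Disjoint W D := Set.disjoint_left.mpr (fun z hzW hzD => hdisj z hzD hzW)
  rw [← Set.ncard_union_eq hdis (Set.toFinite _) (Set.toFinite _)]
  exact Set.ncard_le_ncard (Set.union_subset hW hD) (Set.toFinite _)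

lemma stable_ncard_ge (K : AddSubgroup G) (D : Set G)
    (hst : ∀ d ∈ D, ∀ k ∈ K, d + k ∈ D) (hne : D.Nonempty) : Nat.card K ≤ D.ncard := by
  obtain ⟨d₀, hd₀⟩ := hne
  have hsub : (d₀ + ·) '' (K : Set G) ⊆ D := by
    rintro _ ⟨k, hk, rfl⟩
    exact hst d₀ hd₀ k hk
  calc Nat.card K = ((d₀ + ·) '' (K : Set G)).ncard := (ncard_coset K d₀).symm
    _ ≤ D.ncard := Set.ncard_le_ncard hsub (Set.toFinite _)

lemma slice_le (K : AddSubgroup G) (S : Set G) (c : G ⧸ K) :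
    (S ∩ QuotientAddGroup.mk ⁻¹' {c}).ncard ≤ Nat.card K := by
  rw [← fiber_ncard K c]
  exact Set.ncard_le_ncard Set.inter_subset_right (Set.toFinite _)

open scoped Classical in
lemma classes_card (H K : AddSubgroup G) (hKH : K ≤ H) [Fintype (G ⧸ K)] (q : G ⧸ H) :
    (Finset.univ.filter (fun c : G ⧸ K =>
      (QuotientAddGroup.map K H (AddMonoidHom.id G) (by simpa using hKH)) c = q)).card
      * Nat.card K = Nat.card H := by
  rw [← fiber_ncard H q,
    stable_ncard_eq K _ (fiber_stable H K hKH q)]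
  congr 2
  ext c
  simp only [Finset.mem_filter, Finset.mem_univ, true_and]
  constructor
  · intro h
    obtain ⟨g, rfl⟩ := QuotientAddGroup.mk_surjective c
    rw [QuotientAddGroup.map_mk] at h
    exact ⟨g, h, rfl⟩
  · rintro ⟨g, hgH, hgK⟩
    have : (g : G ⧸ K) = c := hgK
    rw [← this, QuotientAddGroup.map_mk]
    exact hgH
end KeyPrelim

section KeyLemma
variable {G : Type*} [AddCommGroup G] [Fintype G]

lemma key_lemma (H : AddSubgroup G) {d : ℕ} (hmd : Nat.card H = 5 ^ d)
    (u v : G ⧸ H) (X Y W : Set G)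
    (hXsub : X ⊆ QuotientAddGroup.mk ⁻¹' {u})
    (hYsub : Y ⊆ QuotientAddGroup.mk ⁻¹' {v})
    (hWsub : W ⊆ QuotientAddGroup.mk ⁻¹' {u + v})
    (hdisj : ∀ z ∈ X + Y, z ∉ W)
    (hX5 : 2 * Nat.card H + 1 ≤ 5 * X.ncard)
    (hY5 : 2 * Nat.card H + 1 ≤ 5 * Y.ncard) :
    25 * W.ncard ≤ 4 * Nat.card H ∨
    125 * (W.ncard + X.ncard + Y.ncard) ≤ 126 * Nat.card H ∨
    (5 * W.ncard ≤ Nat.card H ∧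
      25 * (W.ncard + X.ncard + Y.ncard) ≤ 26 * Nat.card H) := by
  classical
  have hm1 : 1 ≤ Nat.card H := Nat.card_pos
  have hXne : X.Nonempty := Set.nonempty_of_ncard_ne_zero (by omega)
  have hYne : Y.Nonempty := Set.nonempty_of_ncard_ne_zero (by omega)
  obtain ⟨K, D, hKcl, hDXY, hDne, hDst, hcnt⟩ := transform X Y hXne hYne
  have hKH : K ≤ H :=
    hKcl.trans ((AddSubgroup.closure_le H).mpr (diff_subset_of_fiber H v Y hYsub))
  have hDfib : D ⊆ QuotientAddGroup.mk ⁻¹' {u + v} :=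
    hDXY.trans (add_subset_fiber H u v X Y hXsub hYsub)
  have hWD : W.ncard + D.ncard ≤ Nat.card H := by
    rw [← fiber_ncard H (u + v)]
    exact disjoint_bound _ W D hWsub hDfib (fun z hz => hdisj z (hDXY hz))
  have hKdvd : Nat.card K ∣ 5 ^ d := by
    rw [← hmd]; exact AddSubgroup.card_dvd_of_le hKH
  obtain ⟨j, hjd, hKcard⟩ := (Nat.dvd_prime_pow (by norm_num)).mp hKdvd
  have hDdvd : Nat.card K ∣ D.ncard := stable_dvd K D hDst
  have hK1 : 1 ≤ Nat.card K := Nat.card_pos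
  rcases (by omega : j = d ∨ j + 1 = d ∨ j + 2 = d ∨ j + 3 ≤ d) with hc | hc | hc | hc
  · -- K = H : D contains a full coset of size m
    have hKm : Nat.card K = Nat.card H := by rw [hKcard, hmd, hc]
    have hDge : Nat.card H ≤ D.ncard := hKm ▸ stable_ncard_ge K D hDst hDne
    left; omega
  · -- index 5 : the hard case
    set kk := Nat.card K with hkk
    have hm5 : Nat.card H = 5 * kk := by
      rw [hmd, ← hc, pow_add, hKcard]; ring
    by_cases hDbig : 5 * kk ≤ D.ncard
    · left; omega
    · -- D has exactly 4 cosets of K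
      obtain ⟨c, hcD⟩ := hDdvd
      have hD4 : D.ncard = 4 * kk := by
        have h3 : 3 < c := by
          by_contra hcon
          push_neg at hcon
          have : kk * c ≤ kk * 3 := Nat.mul_le_mul_left _ hcon
          omega
        have h5 : c < 5 := by
          by_contra hcon
          push_neg at hcon
          have : kk * 5 ≤ kk * c := Nat.mul_le_mul_left _ hcon
          omega
        have : c = 4 := by omega
        rw [hcD, this]; ring
      letI : Fintype (G ⧸ K) := Fintype.ofFinite _
      set φ := QuotientAddGroup.map K H (AddMonoidHom.id G) (by simpa using hKH) with hφdef
      have hφmk : ∀ g : G, φ ((g : G ⧸ K)) = (g : G ⧸ H) := by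
        intro g; simp [hφdef, QuotientAddGroup.map_mk]
      set V : Set G := (QuotientAddGroup.mk ⁻¹' {u + v} : Set G) \ D with hV
      have hVst : ∀ z ∈ V, ∀ k ∈ K, z + k ∈ V := by
        rintro z ⟨hz1, hz2⟩ k hk
        refine ⟨fiber_stable H K hKH _ z hz1 k hk, ?_⟩
        intro hzD
        have := hDst _ hzD (-k) (neg_mem hk)
        simp only [add_neg_cancel_right] at this
        exact hz2 this
      have hVcard : V.ncard = kk := by
        rw [hV, Set.ncard_diff hDfib (Set.toFinite _), fiber_ncard]
        omega
      have hVne : V.Nonempty := Set.nonempty_of_ncard_ne_zero (by omega)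
      obtain ⟨v₀, hv₀⟩ := hVne
      have hVmem : ∀ z : G, z ∈ V ↔ (z : G ⧸ K) = (v₀ : G ⧸ K) := by
        have hsub : (v₀ + ·) '' (K : Set G) ⊆ V := by
          rintro _ ⟨k, hk, rfl⟩
          exact hVst v₀ hv₀ k hk
        have heq : (v₀ + ·) '' (K : Set G) = V := by
          refine Set.eq_of_subset_of_ncard_le hsub ?_ (Set.toFinite _)
          rw [hVcard, ncard_coset]
        intro z
        constructor
        · intro hz
          rw [← heq] at hz
          obtain ⟨k, hk, rfl⟩ := hz
          show ((v₀ + k : G) : G ⧸ K) = _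
          rw [QuotientAddGroup.mk_add, (QuotientAddGroup.eq_zero_iff k).mpr hk, add_zero]
        · intro hz
          rw [← heq]
          refine ⟨-v₀ + z, ?_, by show v₀ + (-v₀ + z) = z; abel⟩
          have : ((-v₀ + z : G) : G ⧸ K) = 0 := by
            rw [show (-v₀ + z : G) = z - v₀ by abel, QuotientAddGroup.mk_sub, hz, sub_self]
          exact (QuotientAddGroup.eq_zero_iff _).mp this
      have hWV : W ⊆ V := fun z hz =>
        ⟨hWsub hz, fun hzD => hdisj z (hDXY hzD) hz⟩
      set vb : G ⧸ K := (v₀ : G ⧸ K) with hvb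
      have hφvb : φ vb = u + v := by
        rw [hvb, hφmk]
        exact hv₀.1
      set Fu : Finset (G ⧸ K) := Finset.univ.filter (fun c => φ c = u) with hFu
      set Fv : Finset (G ⧸ K) := Finset.univ.filter (fun c => φ c = v) with hFv
      have hFuc : Fu.card * kk = Nat.card H := by
        rw [hFu, hφdef, hkk]
        exact classes_card H K hKH u
      have hFu5 : Fu.card = 5 := by
        have : Fu.card * kk = 5 * kk := by omega
        exact Nat.eq_of_mul_eq_mul_right (by omega) this
      -- slice sums
      have hsumX : ∑ c ∈ Fu, (X ∩ QuotientAddGroup.mk ⁻¹' {c}).ncard = X.ncard := by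
        rw [ncard_eq_sum_fibers K X]
        refine Finset.sum_subset (Finset.subset_univ _) ?_
        intro c _ hcFu
        rw [Set.ncard_eq_zero (Set.toFinite _)]
        by_contra hne'
        obtain ⟨g, hgX, hgc⟩ := Set.nonempty_iff_ne_empty.mpr hne'
        apply hcFu
        rw [hFu]
        simp only [Finset.mem_filter, Finset.mem_univ, true_and]
        have hgc' : (g : G ⧸ K) = c := hgc
        rw [← hgc', hφmk]
        exact hXsub hgX
      have hsumY : ∑ c ∈ Fv, (Y ∩ QuotientAddGroup.mk ⁻¹' {c}).ncard = Y.ncard := by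
        rw [ncard_eq_sum_fibers K Y]
        refine Finset.sum_subset (Finset.subset_univ _) ?_
        intro c _ hcFv
        rw [Set.ncard_eq_zero (Set.toFinite _)]
        by_contra hne'
        obtain ⟨g, hgY, hgc⟩ := Set.nonempty_iff_ne_empty.mpr hne'
        apply hcFv
        rw [hFv]
        simp only [Finset.mem_filter, Finset.mem_univ, true_and]
        have hgc' : (g : G ⧸ K) = c := hgc
        rw [← hgc', hφmk]
        exact hYsub hgY
      have hrefl : ∀ c ∈ Fu, vb - c ∈ Fv := by
        intro c hcf
        rw [hFv]
        simp only [Finset.mem_filter, Finset.mem_univ, true_and]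
        rw [hFu] at hcf
        simp only [Finset.mem_filter, Finset.mem_univ, true_and] at hcf
        rw [map_sub, hφvb, hcf]
        abel
      have hrefl' : ∀ c ∈ Fv, vb - c ∈ Fu := by
        intro c hcf
        rw [hFu]
        simp only [Finset.mem_filter, Finset.mem_univ, true_and]
        rw [hFv] at hcf
        simp only [Finset.mem_filter, Finset.mem_univ, true_and] at hcf
        rw [map_sub, hφvb, hcf]
        abel
      have hsumY2 : ∑ c ∈ Fu, (Y ∩ QuotientAddGroup.mk ⁻¹' {vb - c}).ncard = Y.ncard := by
        rw [← hsumY]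
        exact Finset.sum_nbij' (fun c => vb - c) (fun c => vb - c) hrefl hrefl'
          (fun a _ => sub_sub_cancel vb a) (fun a _ => sub_sub_cancel vb a)
          (fun a _ => rfl)
      -- the valid-pair set T
      set T : Finset (G ⧸ K) := Fu.filter
        (fun c => 0 < (X ∩ QuotientAddGroup.mk ⁻¹' {c}).ncard ∧
          0 < (Y ∩ QuotientAddGroup.mk ⁻¹' {vb - c}).ncard) with hT
      have hTFu : T ⊆ Fu := Finset.filter_subset _ _
      have hTne : T.Nonempty := by
        set SX : Finset (G ⧸ K) := Fu.filter
          (fun c => 0 < (X ∩ QuotientAddGroup.mk ⁻¹' {c}).ncard) with hSX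
        set SR : Finset (G ⧸ K) := Fu.filter
          (fun c => 0 < (Y ∩ QuotientAddGroup.mk ⁻¹' {vb - c}).ncard) with hSR
        have hSX3 : 3 ≤ SX.card := by
          have hle : X.ncard ≤ SX.card * kk := by
            rw [← hsumX]
            calc ∑ c ∈ Fu, (X ∩ QuotientAddGroup.mk ⁻¹' {c}).ncard
                = ∑ c ∈ SX, (X ∩ QuotientAddGroup.mk ⁻¹' {c}).ncard := by
                  refine (Finset.sum_subset (Finset.filter_subset _ _) ?_).symm
                  intro c hcFu hcSX
                  simp only [Finset.mem_filter, not_and, not_lt] at hcSX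
                  have := hcSX hcFu
                  omega
              _ ≤ SX.card * kk := by
                  rw [← smul_eq_mul]
                  exact Finset.sum_le_card_nsmul _ _ _ (fun c _ => slice_le K X c)
          by_contra hcon
          push_neg at hcon
          have : SX.card * kk ≤ 2 * kk := Nat.mul_le_mul_right _ (by omega)
          omega
        have hSR3 : 3 ≤ SR.card := by
          have hle : Y.ncard ≤ SR.card * kk := by
            rw [← hsumY2]
            calc ∑ c ∈ Fu, (Y ∩ QuotientAddGroup.mk ⁻¹' {vb - c}).ncard
                = ∑ c ∈ SR, (Y ∩ QuotientAddGroup.mk ⁻¹' {vb - c}).ncard := by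
                  refine (Finset.sum_subset (Finset.filter_subset _ _) ?_).symm
                  intro c hcFu hcSR
                  simp only [Finset.mem_filter, not_and, not_lt] at hcSR
                  have := hcSR hcFu
                  omega
              _ ≤ SR.card * kk := by
                  rw [← smul_eq_mul]
                  exact Finset.sum_le_card_nsmul _ _ _ (fun c _ => slice_le K Y _)
          by_contra hcon
          push_neg at hcon
          have : SR.card * kk ≤ 2 * kk := Nat.mul_le_mul_right _ (by omega)
          omega
        have hTeq : T = SX ∩ SR := by
          ext c
          simp only [hT, hSX, hSR, Finset.mem_inter, Finset.mem_filter]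
          tauto
        have hU : (SX ∪ SR).card ≤ 5 := by
          rw [← hFu5]
          exact Finset.card_le_card (Finset.union_subset
            (Finset.filter_subset _ _) (Finset.filter_subset _ _))
        have := Finset.card_inter_add_card_union SX SR
        rw [← Finset.card_pos, hTeq]
        omega
      obtain ⟨c₀, hc₀T, hc₀max⟩ := Finset.exists_max_image T
        (fun c => (X ∩ QuotientAddGroup.mk ⁻¹' {c}).ncard +
          (Y ∩ QuotientAddGroup.mk ⁻¹' {vb - c}).ncard) hTne
      have hc₀T' := hc₀T
      rw [hT, Finset.mem_filter] at hc₀T'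
      obtain ⟨hc₀Fu, hxpos, hypos⟩ := hc₀T'
      set Xc : Set G := X ∩ QuotientAddGroup.mk ⁻¹' {c₀} with hXc
      set Yd : Set G := Y ∩ QuotientAddGroup.mk ⁻¹' {vb - c₀} with hYd
      set σ : ℕ := Xc.ncard + Yd.ncard with hσ
      have hXcne : Xc.Nonempty := Set.nonempty_of_ncard_ne_zero (by omega)
      have hYdne : Yd.Nonempty := Set.nonempty_of_ncard_ne_zero (by omega)
      obtain ⟨K₂, D₂, hK₂cl, hD₂XY, hD₂ne, hD₂st, hcnt₂⟩ := transform Xc Yd hXcne hYdne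
      have hK₂K : K₂ ≤ K := hK₂cl.trans ((AddSubgroup.closure_le K).mpr
        (diff_subset_of_fiber K (vb - c₀) Yd Set.inter_subset_right))
      have hD₂V : D₂ ⊆ V := by
        intro z hz
        obtain ⟨a, ha, b, hb, rfl⟩ := Set.mem_add.mp (hD₂XY hz)
        rw [hVmem]
        have ha' : (a : G ⧸ K) = c₀ := ha.2
        have hb' : (b : G ⧸ K) = vb - c₀ := hb.2
        rw [QuotientAddGroup.mk_add, ha', hb']
        abel
      have hD₂XY' : D₂ ⊆ X + Y :=
        hD₂XY.trans (Set.add_subset_add Set.inter_subset_left Set.inter_subset_left)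
      have hWD₂ : W.ncard + D₂.ncard ≤ kk := by
        rw [← hVcard]
        exact disjoint_bound V W D₂ hWV hD₂V (fun z hz => hdisj z (hD₂XY' hz))
      have hK₂dvd : Nat.card K₂ ∣ 5 ^ j := by
        rw [← hKcard]; exact AddSubgroup.card_dvd_of_le hK₂K
      obtain ⟨j₂, hj₂, hK₂card⟩ := (Nat.dvd_prime_pow (by norm_num)).mp hK₂dvd
      have hK₂1 : 1 ≤ Nat.card K₂ := Nat.card_pos
      have hD₂ge : Nat.card K₂ ≤ D₂.ncard := stable_ncard_ge K₂ D₂ hD₂st hD₂ne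
      rcases (by omega : j₂ = j ∨ j₂ + 1 = j ∨ j₂ + 2 ≤ j) with hc2 | hc2 | hc2
      · -- K₂ has size kk : D₂ is everything, W empty
        have : Nat.card K₂ = kk := by rw [hK₂card, hc2, ← hKcard]
        left; omega
      · -- K₂ has size kk/5 : D₂ ≥ kk/5, so 25a ≤ 4m
        have h52 : 5 * Nat.card K₂ = kk := by
          rw [hK₂card, hKcard, ← hc2]; ring
        left
        omega
      · -- K₂ small
        have hK₂small : 25 * Nat.card K₂ ≤ kk := by
          rw [hK₂card, hKcard]
          calc 25 * 5 ^ j₂ = 5 ^ (j₂ + 2) := by rw [pow_add]; ring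
            _ ≤ 5 ^ j := Nat.pow_le_pow_right (by norm_num) hc2
        by_cases hA : 6 * kk ≤ 25 * σ
        · -- flat branch
          left
          omega
        · -- need the |T| = 1 argument
          push_neg at hA
          have hstT : ∑ c ∈ T, ((X ∩ QuotientAddGroup.mk ⁻¹' {c}).ncard +
              (Y ∩ QuotientAddGroup.mk ⁻¹' {vb - c}).ncard) ≤ T.card * σ := by
            rw [← smul_eq_mul]
            exact Finset.sum_le_card_nsmul _ _ _ (fun c hcT => hc₀max c hcT)
          have hstN : ∑ c ∈ Fu \ T, ((X ∩ QuotientAddGroup.mk ⁻¹' {c}).ncard +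
              (Y ∩ QuotientAddGroup.mk ⁻¹' {vb - c}).ncard) ≤ (Fu \ T).card * kk := by
            rw [← smul_eq_mul]
            refine Finset.sum_le_card_nsmul _ _ _ (fun c hcT => ?_)
            rw [Finset.mem_sdiff] at hcT
            have h1 := slice_le K X c
            have h2 := slice_le K Y (vb - c)
            have h3 : ¬(0 < (X ∩ QuotientAddGroup.mk ⁻¹' {c}).ncard ∧
                0 < (Y ∩ QuotientAddGroup.mk ⁻¹' {vb - c}).ncard) := by
              intro hcon
              refine hcT.2 ?_
              rw [hT, Finset.mem_filter]
              exact ⟨hcT.1, hcon⟩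
            omega
          have hsplit2 : ∑ c ∈ Fu \ T, ((X ∩ QuotientAddGroup.mk ⁻¹' {c}).ncard +
              (Y ∩ QuotientAddGroup.mk ⁻¹' {vb - c}).ncard) +
              ∑ c ∈ T, ((X ∩ QuotientAddGroup.mk ⁻¹' {c}).ncard +
              (Y ∩ QuotientAddGroup.mk ⁻¹' {vb - c}).ncard) = X.ncard + Y.ncard := by
            rw [Finset.sum_sdiff hTFu, Finset.sum_add_distrib, hsumX, hsumY2]
          have hTcard5 : T.card ≤ 5 := hFu5 ▸ Finset.card_le_card hTFu
          have hTcard1 : 1 ≤ T.card := Finset.card_pos.mpr hTne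
          have hsd : (Fu \ T).card = 5 - T.card := by
            rw [Finset.card_sdiff_of_subset hTFu, hFu5]
          rw [hsd] at hstN
          have hB : X.ncard + Y.ncard ≤ σ + 4 * kk := by
            rcases (by omega : T.card = 1 ∨ T.card = 2 ∨ T.card = 3 ∨ T.card = 4 ∨
              T.card = 5) with h | h | h | h | h <;> rw [h] at hstT hstN <;> omega
          right; left
          omega
  · -- index 25
    set kk := Nat.card K with hkk
    have hm25 : Nat.card H = 25 * kk := by
      rw [hmd, ← hc, pow_add, hKcard]; ring
    obtain ⟨c, hcD⟩ := hDdvd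
    have hD20 : 20 * kk ≤ D.ncard := by
      have h4 : 19 < c := by
        by_contra hcon
        push_neg at hcon
        have : kk * c ≤ kk * 19 := Nat.mul_le_mul_left _ hcon
        omega
      have : kk * 20 ≤ kk * c := Nat.mul_le_mul_left _ (by omega)
      omega
    right; right
    constructor
    · omega
    · omega
  · -- small K
    have hKsmall : 125 * Nat.card K ≤ Nat.card H := by
      rw [hKcard, hmd]
      calc 125 * 5 ^ j = 5 ^ (j + 3) := by rw [pow_add]; ring
        _ ≤ 5 ^ d := Nat.pow_le_pow_right (by norm_num) hc
    right; left; omega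

end KeyLemma

section Concrete
variable {n : ℕ}

lemma card_G5 (n : ℕ) : Nat.card (Fin n → ZMod 5) = 5 ^ n := by
  rw [Nat.card_eq_fintype_card, Fintype.card_pi]
  simp [ZMod.card]

lemma five_nsmul_zero (g : Fin n → ZMod 5) : (5 : ℕ) • g = 0 := by
  funext i
  show (5 : ℕ) • g i = 0
  rw [nsmul_eq_mul, show ((5 : ℕ) : ZMod 5) = 0 from ZMod.natCast_self 5, zero_mul]

lemma card_quot_coatom (H : AddSubgroup (Fin n → ZMod 5)) (hH : IsCoatom H) :
    Nat.card ((Fin n → ZMod 5) ⧸ H) = 5 := by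
  obtain ⟨hne, hmax⟩ := hH
  have hex : ∃ g, g ∉ H := by
    by_contra hcon
    push_neg at hcon
    exact hne ((AddSubgroup.eq_top_iff' H).mpr hcon)
  obtain ⟨g, hg⟩ := hex
  have hsup : H ⊔ AddSubgroup.closure {g} = ⊤ := by
    refine hmax _ (lt_iff_le_and_ne.mpr ⟨le_sup_left, ?_⟩)
    intro heq
    apply hg
    have hmem : g ∈ H ⊔ AddSubgroup.closure {g} :=
      AddSubgroup.mem_sup_right (AddSubgroup.subset_closure rfl)
    rw [← heq] at hmem
    exact hmem
  have hzne : ((g : (Fin n → ZMod 5) ⧸ H)) ≠ 0 :=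
    fun h => hg ((QuotientAddGroup.eq_zero_iff g).mp h)
  have hgen : ∀ q : (Fin n → ZMod 5) ⧸ H, ∃ k : ℤ,
      k • ((g : (Fin n → ZMod 5) ⧸ H)) = q := by
    intro q
    obtain ⟨x, rfl⟩ := QuotientAddGroup.mk_surjective q
    have hx : x ∈ (⊤ : AddSubgroup (Fin n → ZMod 5)) := trivial
    rw [← hsup] at hx
    obtain ⟨y, hy, z, hz, rfl⟩ := (AddSubgroup.mem_sup).mp hx
    obtain ⟨k, hk⟩ := (AddSubgroup.mem_closure_singleton).mp hz
    refine ⟨k, ?_⟩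
    rw [QuotientAddGroup.mk_add, (QuotientAddGroup.eq_zero_iff y).mpr hy, zero_add,
      ← hk, QuotientAddGroup.mk_zsmul]
  have h5g : (5 : ℤ) • ((g : (Fin n → ZMod 5) ⧸ H)) = 0 := by
    have h1 : (5 : ℕ) • ((g : (Fin n → ZMod 5) ⧸ H)) = 0 := by
      rw [← QuotientAddGroup.mk_nsmul, five_nsmul_zero]
      rfl
    exact_mod_cast h1
  have hsurj : Function.Surjective
      (fun i : Fin 5 => ((i : ℕ) : ℤ) • ((g : (Fin n → ZMod 5) ⧸ H))) := by
    intro q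
    obtain ⟨k, hk⟩ := hgen q
    have h0 : 0 ≤ k % 5 := Int.emod_nonneg k (by norm_num)
    have h1 : k % 5 < 5 := Int.emod_lt_of_pos k (by norm_num)
    refine ⟨⟨(k % 5).toNat, by omega⟩, ?_⟩
    show (((k % 5).toNat : ℕ) : ℤ) • _ = q
    rw [Int.toNat_of_nonneg h0]
    have hdecomp : k = 5 * (k / 5) + k % 5 := (Int.mul_ediv_add_emod k 5).symm
    calc (k % 5) • ((g : (Fin n → ZMod 5) ⧸ H))
        = (5 * (k / 5)) • ((g : (Fin n → ZMod 5) ⧸ H)) + (k % 5) • _ := by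
          rw [mul_comm, mul_smul, h5g, smul_zero, zero_add]
      _ = k • ((g : (Fin n → ZMod 5) ⧸ H)) := by rw [← add_zsmul, ← hdecomp]
      _ = q := hk
  have hle : Nat.card ((Fin n → ZMod 5) ⧸ H) ≤ 5 := by
    have := Nat.card_le_card_of_surjective _ hsurj
    simpa using this
  have hdvd : Nat.card ((Fin n → ZMod 5) ⧸ H) ∣ 5 ^ n := by
    rw [← card_G5 n]
    exact Dvd.intro _ (AddSubgroup.card_eq_card_quotient_mul_card_addSubgroup H).symm
  have hgt : 1 < Nat.card ((Fin n → ZMod 5) ⧸ H) := by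
    letI : Fintype ((Fin n → ZMod 5) ⧸ H) := Fintype.ofFinite _
    rw [Nat.card_eq_fintype_card]
    rw [Fintype.one_lt_card_iff_nontrivial]
    exact ⟨0, (g : (Fin n → ZMod 5) ⧸ H), fun h => hzne h.symm⟩
  obtain ⟨k, hk5, hcard⟩ := (Nat.dvd_prime_pow (by norm_num)).mp hdvd
  rw [hcard]
  rcases (by omega : k = 0 ∨ 1 ≤ k) with h | h
  · rw [h] at hcard; simp at hcard; omega
  · have h5 : 5 ≤ 5 ^ k := by
      calc (5:ℕ) = 5 ^ 1 := (pow_one 5).symm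
        _ ≤ 5 ^ k := Nat.pow_le_pow_right (by norm_num) h
    rw [hcard] at hle
    have : 5 ^ k = 5 := by omega
    rw [this]

lemma card_H_coatom (hn : 1 ≤ n) (H : AddSubgroup (Fin n → ZMod 5)) (hH : IsCoatom H) :
    Nat.card H = 5 ^ (n - 1) := by
  have h1 := AddSubgroup.card_eq_card_quotient_mul_card_addSubgroup H
  rw [card_G5 n, card_quot_coatom H hH] at h1
  have h2 : 5 ^ n = 5 * 5 ^ (n - 1) := by
    rw [← pow_succ']
    congr 1
    omega
  omega

end Concrete

section Final
variable {n : ℕ}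

lemma torsion5 (H : AddSubgroup (Fin n → ZMod 5)) (q : (Fin n → ZMod 5) ⧸ H) :
    (5 : ℕ) • q = 0 := by
  induction q using QuotientAddGroup.induction_on with
  | H g =>
    rw [← QuotientAddGroup.mk_nsmul, five_nsmul_zero, QuotientAddGroup.mk_zero]

lemma smul_ne5 (H : AddSubgroup (Fin n → ZMod 5)) (q : (Fin n → ZMod 5) ⧸ H)
    (hq : q ≠ 0) (j : ℕ) (h1 : 1 ≤ j) (h4 : j ≤ 4) : j • q ≠ 0 := by
  have h5 := torsion5 H q
  have h6 : (6 : ℕ) • q = q := by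
    rw [show (6:ℕ) = 5 + 1 by norm_num, add_nsmul, h5, one_nsmul, zero_add]
  have h16 : (16 : ℕ) • q = q := by
    rw [show (16:ℕ) = 5 * 3 + 1 by norm_num, add_nsmul, mul_nsmul, h5,
      smul_zero, one_nsmul, zero_add]
  interval_cases j
  · rwa [one_nsmul]
  · intro h2
    apply hq
    rw [← h6, show (6:ℕ) = 2 * 3 by norm_num, mul_nsmul, h2, smul_zero]
  · intro h3
    apply hq
    rw [← h6, show (6:ℕ) = 3 * 2 by norm_num, mul_nsmul, h3, smul_zero]
  · intro h4'
    apply hq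
    rw [← h16, show (16:ℕ) = 4 * 4 by norm_num, mul_nsmul, h4', smul_zero]

lemma nsmul_inj5 (H : AddSubgroup (Fin n → ZMod 5)) (q : (Fin n → ZMod 5) ⧸ H)
    (hq : q ≠ 0) (a b : ℕ) (ha : a < 5) (hb : b < 5) (hab : a • q = b • q) : a = b := by
  rcases le_total a b with h | h
  · by_contra hne
    have hd : b = a + (b - a) := by omega
    rw [hd, add_nsmul] at hab
    have : (b - a) • q = 0 := by
      have h2 := hab.symm
      rwa [add_eq_left] at h2
    exact smul_ne5 H q hq (b - a) (by omega) (by omega) this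
  · by_contra hne
    have hd : a = b + (a - b) := by omega
    rw [hd, add_nsmul] at hab
    have : (a - b) • q = 0 := by
      have h2 := hab
      rwa [add_eq_left] at h2
    exact smul_ne5 H q hq (a - b) (by omega) (by omega) this

/-- every element of the quotient is a multiple of a nonzero element -/
lemma gen5 (H : AddSubgroup (Fin n → ZMod 5)) (hQ : Nat.card ((Fin n → ZMod 5) ⧸ H) = 5)
    (x y : (Fin n → ZMod 5) ⧸ H) (hx : x ≠ 0) : ∃ k : ℕ, k < 5 ∧ k • x = y := by
  classical
  letI : Fintype ((Fin n → ZMod 5) ⧸ H) := Fintype.ofFinite _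
  have hinj : Function.Injective (fun k : Fin 5 => (k : ℕ) • x) := by
    intro k l h
    exact Fin.ext (nsmul_inj5 H x hx k l k.isLt l.isLt h)
  have hcard : (Finset.image (fun k : Fin 5 => (k : ℕ) • x) Finset.univ).card =
      Fintype.card ((Fin n → ZMod 5) ⧸ H) := by
    rw [Finset.card_image_of_injective _ hinj, Finset.card_univ, Fintype.card_fin,
      ← Nat.card_eq_fintype_card, hQ]
  have huniv := Finset.eq_univ_of_card _ hcard
  have : y ∈ Finset.image (fun k : Fin 5 => (k : ℕ) • x) Finset.univ := by
    rw [huniv]; exact Finset.mem_univ y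
  obtain ⟨k, _, hk⟩ := Finset.mem_image.mp this
  exact ⟨(k : ℕ), k.isLt, hk⟩

end Final
theorem stmt_5 (n : ℕ) (hn : 1 ≤ n) (A : Set (Fin n → ZMod 5))
    (hA : SumFree A) (hcard : 2 * A.ncard > 3 * 5 ^ (n - 1))
    (H : AddSubgroup (Fin n → ZMod 5)) (hH : IsCoatom H)
    (hhalf : ∀ x : (Fin n → ZMod 5) ⧸ H,
      2 * (A ∩ (QuotientAddGroup.mk ⁻¹' {x})).ncard < Nat.card H) :
    {x : (Fin n → ZMod 5) ⧸ H |
      5 * (A ∩ (QuotientAddGroup.mk ⁻¹' {x})).ncard > 2 * Nat.card H}.ncard ≤ 1 := by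
  classical
  by_contra hcon
  rw [not_le] at hcon
  obtain ⟨x, y, hxB, hyB, hxy⟩ := (Set.one_lt_ncard_iff (Set.toFinite _)).mp hcon
  simp only [Set.mem_setOf_eq] at hxB hyB
  have hmd : Nat.card H = 5 ^ (n - 1) := card_H_coatom hn H hH
  have hQ5 : Nat.card ((Fin n → ZMod 5) ⧸ H) = 5 := card_quot_coatom H hH
  have hm1 : 1 ≤ Nat.card H := Nat.card_pos
  have hbx : 2 * Nat.card H + 1 ≤ 5 * (A ∩ QuotientAddGroup.mk ⁻¹' {x}).ncard := by omega
  have hby : 2 * Nat.card H + 1 ≤ 5 * (A ∩ QuotientAddGroup.mk ⁻¹' {y}).ncard := by omega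
  have hdisj : ∀ q r : (Fin n → ZMod 5) ⧸ H,
      ∀ z ∈ (A ∩ QuotientAddGroup.mk ⁻¹' {q}) + (A ∩ QuotientAddGroup.mk ⁻¹' {r}),
      z ∉ A ∩ QuotientAddGroup.mk ⁻¹' {q + r} := by
    intro q r z hz hzin
    obtain ⟨a, ha, b, hb, rfl⟩ := Set.mem_add.mp hz
    exact hA a ha.1 b hb.1 hzin.1
  have hkey : ∀ q r : (Fin n → ZMod 5) ⧸ H,
      2 * Nat.card H + 1 ≤ 5 * (A ∩ QuotientAddGroup.mk ⁻¹' {q}).ncard →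
      2 * Nat.card H + 1 ≤ 5 * (A ∩ QuotientAddGroup.mk ⁻¹' {r}).ncard →
      25 * (A ∩ QuotientAddGroup.mk ⁻¹' {q + r}).ncard ≤ 4 * Nat.card H ∨
      125 * ((A ∩ QuotientAddGroup.mk ⁻¹' {q + r}).ncard +
        (A ∩ QuotientAddGroup.mk ⁻¹' {q}).ncard +
        (A ∩ QuotientAddGroup.mk ⁻¹' {r}).ncard) ≤ 126 * Nat.card H ∨
      (5 * (A ∩ QuotientAddGroup.mk ⁻¹' {q + r}).ncard ≤ Nat.card H ∧
        25 * ((A ∩ QuotientAddGroup.mk ⁻¹' {q + r}).ncard +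
        (A ∩ QuotientAddGroup.mk ⁻¹' {q}).ncard +
        (A ∩ QuotientAddGroup.mk ⁻¹' {r}).ncard) ≤ 26 * Nat.card H) :=
    fun q r hq hr =>
      key_lemma H hmd q r _ _ _ Set.inter_subset_right Set.inter_subset_right
        Set.inter_subset_right (hdisj q r) hq hr
  have hNB : ∀ q : (Fin n → ZMod 5) ⧸ H,
      2 * Nat.card H + 1 ≤ 5 * (A ∩ QuotientAddGroup.mk ⁻¹' {q}).ncard →
      5 * (A ∩ QuotientAddGroup.mk ⁻¹' {q + q}).ncard ≤ 2 * Nat.card H := by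
    intro q hq
    rcases hkey q q hq hq with h | h | h
    · omega
    · omega
    · omega
  have h0nb : ¬ (2 * Nat.card H + 1 ≤
      5 * (A ∩ QuotientAddGroup.mk ⁻¹' {(0 : (Fin n → ZMod 5) ⧸ H)}).ncard) := by
    intro h0
    have := hNB 0 h0
    rw [add_zero] at this
    omega
  have hx0 : x ≠ 0 := fun h => h0nb (h ▸ hbx)
  have hy0 : y ≠ 0 := fun h => h0nb (h ▸ hby)
  obtain ⟨k, hk5, hky⟩ := gen5 H hQ5 x y hx0
  rcases (by omega : k = 0 ∨ k = 1 ∨ k = 2 ∨ k = 3 ∨ k = 4) with hk | hk | hk | hk | hk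
  · subst hk; rw [zero_nsmul] at hky; exact hy0 hky.symm
  · subst hk; rw [one_nsmul] at hky; exact hxy hky
  · subst hk
    rw [two_nsmul] at hky
    have h2 := hNB x hbx
    rw [hky] at h2
    omega
  · subst hk
    have h2y : y + y = x := by
      rw [← hky, ← two_nsmul, ← mul_nsmul,
        show (3 * 2 : ℕ) = 5 + 1 by norm_num, add_nsmul, torsion5 H x, zero_add, one_nsmul]
    have h2 := hNB y hby
    rw [h2y] at h2
    omega
  · subst hk
    have h5x : (5 : ℕ) • x = x + (4 : ℕ) • x := by
      have h14 := add_nsmul x 1 4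
      norm_num [one_nsmul] at h14
      exact h14
    have hxy0 : x + y = 0 := by
      rw [← hky, ← h5x, torsion5 H x]
    have h3x : (3 : ℕ) • x = y + y := by
      rw [← hky, ← two_nsmul, ← mul_nsmul,
        show (4 * 2 : ℕ) = 5 + 3 by norm_num, add_nsmul, torsion5 H x, zero_add]
    letI : Fintype ((Fin n → ZMod 5) ⧸ H) := Fintype.ofFinite _
    have hinj : Function.Injective (fun k : Fin 5 => (k : ℕ) • x) := by
      intro k l h
      exact Fin.ext (nsmul_inj5 H x hx0 k l k.isLt l.isLt h)
    have himg : Finset.image (fun k : Fin 5 => (k : ℕ) • x) Finset.univ = Finset.univ := by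
      refine Finset.eq_univ_of_card _ ?_
      rw [Finset.card_image_of_injective _ hinj, Finset.card_univ, Fintype.card_fin,
        ← Nat.card_eq_fintype_card, hQ5]
    have hsum : A.ncard =
        ∑ k : Fin 5, (A ∩ QuotientAddGroup.mk ⁻¹' {(k : ℕ) • x}).ncard := by
      rw [ncard_eq_sum_fibers H A]
      calc ∑ q : (Fin n → ZMod 5) ⧸ H, (A ∩ QuotientAddGroup.mk ⁻¹' {q}).ncard
          = ∑ q ∈ Finset.image (fun k : Fin 5 => (k : ℕ) • x) Finset.univ,
            (A ∩ QuotientAddGroup.mk ⁻¹' {q}).ncard := by rw [himg]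
        _ = _ := Finset.sum_image (fun a _ b _ h => hinj h)
    have c0 : ((0 : Fin 5) : ℕ) • x = (0 : (Fin n → ZMod 5) ⧸ H) := by
      rw [show ((0 : Fin 5) : ℕ) = 0 from rfl, zero_nsmul]
    have c1 : ((1 : Fin 5) : ℕ) • x = x := by
      rw [show ((1 : Fin 5) : ℕ) = 1 from rfl, one_nsmul]
    have c2 : ((2 : Fin 5) : ℕ) • x = x + x := by
      rw [show ((2 : Fin 5) : ℕ) = 2 from rfl, two_nsmul]
    have c3 : ((3 : Fin 5) : ℕ) • x = y + y := by
      rw [show ((3 : Fin 5) : ℕ) = 3 from rfl, h3x]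
    have c4 : ((4 : Fin 5) : ℕ) • x = y := by
      rw [show ((4 : Fin 5) : ℕ) = 4 from rfl]; exact hky
    rw [Fin.sum_univ_five] at hsum
    simp only [c0, c1, c2, c3, c4] at hsum
    have KA := hkey x x hbx hbx
    have KB := hkey y y hby hby
    have KC := hkey x y hbx hby
    rw [hxy0] at KC
    have hh2x := hhalf (x + x)
    have hh2y := hhalf (y + y)
    have hh0 := hhalf 0
    have hhx := hhalf x
    have hhy := hhalf y
    rw [← hmd] at hcard
    rcases KA with hA1 | hA1 | hA1 <;> rcases KB with hB1 | hB1 | hB1 <;>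
      rcases KC with hC1 | hC1 | hC1 <;> omega
end

section
/- Let A be a finite sum-free subset of a finite abelian group G with |A| = α|G|. Then there exists a non-principal character χ of G such that Re(𝟙̂_A(χ)) ≤ -α²/(1-α), where 𝟙̂_A(χ) := |G|⁻¹ Σ_{a∈A} χ(a). -/
theorem stmt_12 {G : Type*} [AddCommGroup G] [Fintype G]
    (A : Finset G) (hA : SumFree (A : Set G)) (α : ℝ)
    (hα : α = (A.card : ℝ) / Fintype.card G) (h0 : 0 < α) (h1 : α < 1) :
    ∃ χ : AddChar G ℂ, χ ≠ 1 ∧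
      ((∑ a ∈ A, χ a) / (Fintype.card G : ℂ)).re ≤ -α ^ 2 / (1 - α) := by
  classical
  set n : ℝ := (Fintype.card G : ℝ) with hn
  have hnpos : (0 : ℝ) < n := by
    have : 0 < Fintype.card G := Fintype.card_pos
    rw [hn]; exact_mod_cast this
  set a : ℝ := (A.card : ℝ) with ha
  have haeq : a = α * n := by
    rw [hα]; field_simp
  have hapos : 0 < a := by
    rw [haeq]; positivity
  have haltn : a < n := by
    rw [haeq]
    nlinarith
  set F : AddChar G ℂ → ℂ := fun χ => ∑ x ∈ A, χ x with hF
  -- orthogonality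
  have orth : ∀ b : G, ∑ χ : AddChar G ℂ, χ b
      = if b = 0 then (Fintype.card G : ℂ) else 0 := fun b =>
    AddChar.sum_apply_eq_ite b
  -- triple sum is zero (sum-freeness)
  have key1 : ∑ χ : AddChar G ℂ, F χ * F χ * (starRingEnd ℂ) (F χ) = 0 := by
    have expand : ∀ χ : AddChar G ℂ, F χ * F χ * (starRingEnd ℂ) (F χ)
        = ∑ x ∈ A, ∑ y ∈ A, ∑ z ∈ A, χ (x + y - z) := by
      intro χ
      rw [hF]
      simp only [map_sum]
      rw [Finset.sum_mul_sum, Finset.sum_mul]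
      refine Finset.sum_congr rfl fun x _ => ?_
      rw [Finset.sum_mul]
      refine Finset.sum_congr rfl fun y _ => ?_
      rw [Finset.mul_sum]
      refine Finset.sum_congr rfl fun z _ => ?_
      rw [sub_eq_add_neg, AddChar.map_add_eq_mul, AddChar.map_add_eq_mul,
        AddChar.map_neg_eq_conj]
    calc ∑ χ : AddChar G ℂ, F χ * F χ * (starRingEnd ℂ) (F χ)
        = ∑ χ : AddChar G ℂ, ∑ x ∈ A, ∑ y ∈ A, ∑ z ∈ A, χ (x + y - z) :=
          Finset.sum_congr rfl fun χ _ => expand χ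
      _ = ∑ x ∈ A, ∑ χ : AddChar G ℂ, ∑ y ∈ A, ∑ z ∈ A, χ (x + y - z) :=
          Finset.sum_comm
      _ = ∑ x ∈ A, ∑ y ∈ A, ∑ z ∈ A, ∑ χ : AddChar G ℂ, χ (x + y - z) := by
          refine Finset.sum_congr rfl fun x _ => ?_
          rw [Finset.sum_comm]
          exact Finset.sum_congr rfl fun y _ => Finset.sum_comm
      _ = 0 := by
          refine Finset.sum_eq_zero fun x hx => Finset.sum_eq_zero fun y hy =>
            Finset.sum_eq_zero fun z hz => ?_
          rw [orth, if_neg]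
          intro h
          have hxy : x + y = z := by
            have := sub_eq_zero.mp h
            exact this
          exact hA x hx y hy (hxy ▸ hz)
  -- Parseval
  have key2 : ∑ χ : AddChar G ℂ, F χ * (starRingEnd ℂ) (F χ)
      = (Fintype.card G : ℂ) * (A.card : ℂ) := by
    have expand : ∀ χ : AddChar G ℂ, F χ * (starRingEnd ℂ) (F χ)
        = ∑ x ∈ A, ∑ z ∈ A, χ (x - z) := by
      intro χ
      rw [hF]
      simp only [map_sum]
      rw [Finset.sum_mul]
      refine Finset.sum_congr rfl fun x _ => ?_
      rw [Finset.mul_sum]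
      refine Finset.sum_congr rfl fun z _ => ?_
      rw [sub_eq_add_neg, AddChar.map_add_eq_mul, AddChar.map_neg_eq_conj]
    calc ∑ χ : AddChar G ℂ, F χ * (starRingEnd ℂ) (F χ)
        = ∑ χ : AddChar G ℂ, ∑ x ∈ A, ∑ z ∈ A, χ (x - z) :=
          Finset.sum_congr rfl fun χ _ => expand χ
      _ = ∑ x ∈ A, ∑ z ∈ A, ∑ χ : AddChar G ℂ, χ (x - z) := by
          rw [Finset.sum_comm]
          exact Finset.sum_congr rfl fun x _ => Finset.sum_comm
      _ = ∑ x ∈ A, ∑ z ∈ A, if x = z then (Fintype.card G : ℂ) else 0 := by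
          refine Finset.sum_congr rfl fun x _ => Finset.sum_congr rfl fun z _ => ?_
          rw [orth, sub_eq_zero]
      _ = (Fintype.card G : ℂ) * (A.card : ℂ) := by
          simp only [Finset.sum_ite_eq]
          rw [Finset.sum_congr rfl fun x (hx : x ∈ A) => if_pos hx]
          simp [Finset.sum_const, nsmul_eq_mul, mul_comm]
  -- pass to real parts
  have hmulconj : ∀ χ : AddChar G ℂ,
      F χ * (starRingEnd ℂ) (F χ) = ((Complex.normSq (F χ) : ℝ) : ℂ) :=
    fun χ => Complex.mul_conj (F χ)
  have key1' : ∑ χ : AddChar G ℂ, (F χ).re * Complex.normSq (F χ) = 0 := by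
    have h := congrArg Complex.re key1
    rw [Complex.re_sum, Complex.zero_re] at h
    calc ∑ χ : AddChar G ℂ, (F χ).re * Complex.normSq (F χ)
        = ∑ χ : AddChar G ℂ, (F χ * F χ * (starRingEnd ℂ) (F χ)).re :=
          Finset.sum_congr rfl fun χ _ => by
            rw [mul_assoc, hmulconj χ]; simp [Complex.mul_re]
      _ = 0 := h
  have key2' : ∑ χ : AddChar G ℂ, Complex.normSq (F χ) = n * a := by
    have h := congrArg Complex.re key2
    rw [Complex.re_sum] at h
    calc ∑ χ : AddChar G ℂ, Complex.normSq (F χ)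
        = ∑ χ : AddChar G ℂ, (F χ * (starRingEnd ℂ) (F χ)).re :=
          Finset.sum_congr rfl fun χ _ => by rw [hmulconj χ]; simp
      _ = ((Fintype.card G : ℂ) * (A.card : ℂ)).re := h
      _ = n * a := by
          rw [← Nat.cast_mul, Complex.natCast_re, hn, ha]; push_cast; ring
  -- the trivial character
  have hF1 : F 1 = (A.card : ℂ) := by simp [hF]
  have hF1re : (F (1 : AddChar G ℂ)).re = a := by rw [hF1, ha]; norm_cast
  have hF1sq : Complex.normSq (F 1) = a ^ 2 := by
    rw [hF1, ha]; rw [Complex.normSq_natCast]; push_cast; ring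
  set s : Finset (AddChar G ℂ) := Finset.univ.erase 1 with hs
  have split1 : ∑ χ ∈ s, (F χ).re * Complex.normSq (F χ) = -(a ^ 3) := by
    have h := Finset.sum_erase_add Finset.univ
      (fun χ : AddChar G ℂ => (F χ).re * Complex.normSq (F χ))
      (Finset.mem_univ (1 : AddChar G ℂ))
    rw [key1'] at h
    simp only [hF1re, hF1sq] at h
    rw [← hs] at h
    nlinarith [h]
  have split2 : ∑ χ ∈ s, Complex.normSq (F χ) = n * a - a ^ 2 := by
    have h := Finset.sum_erase_add Finset.univ
      (fun χ : AddChar G ℂ => Complex.normSq (F χ))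
      (Finset.mem_univ (1 : AddChar G ℂ))
    rw [key2'] at h
    simp only [hF1sq] at h
    rw [← hs] at h
    linarith
  -- contradiction argument
  by_contra hcon
  push_neg at hcon
  have hre : ∀ χ : AddChar G ℂ, ((F χ) / (Fintype.card G : ℂ)).re = (F χ).re / n := by
    intro χ
    have : ((Fintype.card G : ℂ)) = ((n : ℝ) : ℂ) := by rw [hn]; norm_cast
    rw [this, Complex.div_ofReal_re]
  have hbound : ∀ χ ∈ s, (-α ^ 2 / (1 - α)) * n < (F χ).re := by
    intro χ hχ
    have hne : χ ≠ 1 := (Finset.mem_erase.mp hχ).1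
    have := hcon χ hne
    rw [hre χ, lt_div_iff₀ hnpos] at this
    exact this
  -- some nontrivial character has nonzero Fourier mass
  have hex : ∃ χ ∈ s, Complex.normSq (F χ) ≠ 0 := by
    by_contra hall
    push_neg at hall
    have : ∑ χ ∈ s, Complex.normSq (F χ) = 0 := Finset.sum_eq_zero hall
    rw [split2] at this
    nlinarith
  obtain ⟨χ₀, hχ₀s, hχ₀⟩ := hex
  have hχ₀pos : 0 < Complex.normSq (F χ₀) :=
    lt_of_le_of_ne (Complex.normSq_nonneg _) (Ne.symm hχ₀)
  set c : ℝ := (-α ^ 2 / (1 - α)) * n with hc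
  have hlt : ∑ χ ∈ s, c * Complex.normSq (F χ)
      < ∑ χ ∈ s, (F χ).re * Complex.normSq (F χ) := by
    refine Finset.sum_lt_sum (fun χ hχ => ?_) ⟨χ₀, hχ₀s, ?_⟩
    · exact mul_le_mul_of_nonneg_right (le_of_lt (hbound χ hχ)) (Complex.normSq_nonneg _)
    · exact mul_lt_mul_of_pos_right (hbound χ₀ hχ₀s) hχ₀pos
  rw [← Finset.mul_sum, split2, split1] at hlt
  have h1α : (1 : ℝ) - α ≠ 0 := by linarith
  have : c * (n * a - a ^ 2) = -(a ^ 3) := by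
    rw [hc, haeq]
    field_simp
  rw [this] at hlt
  exact lt_irrefl _ hlt
end

section
/- Let n ≥ 1 and suppose A ⊆ (ℤ/5ℤ)^n is sum-free. Then |A| ≤ 2·5^(n-1). -/
open Finset Pointwise

theorem stmt_16 (n : ℕ) (hn : 1 ≤ n) (A : Set (Fin n → ZMod 5))
    (hA : SumFree A) : A.ncard ≤ 2 * 5 ^ (n - 1) := by
  classical
  by_contra hlt
  push_neg at hlt
  have hAfin : A.Finite := Set.toFinite A
  set B : Finset (Fin n → ZMod 5) := hAfin.toFinset with hBdef
  have hmem : ∀ x : Fin n → ZMod 5, x ∈ B ↔ x ∈ A := fun x => hAfin.mem_toFinset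
  have hcard : A.ncard = B.card := Set.ncard_eq_toFinset_card A hAfin
  set K := B.card with hK
  rw [hcard] at hlt
  have hpow : 1 ≤ 5 ^ (n - 1) := Nat.one_le_pow _ _ (by norm_num)
  have hKpos : 0 < K := by omega
  obtain ⟨a₀, ha₀⟩ := card_pos.1 hKpos
  have hsf : ∀ a ∈ B, ∀ b ∈ B, a + b ∉ B := by
    intro a ha b hb hab
    exact hA a ((hmem a).1 ha) b ((hmem b).1 hb) ((hmem _).1 hab)
  have hN : Fintype.card (Fin n → ZMod 5) = 5 ^ n := by
    simp [Fintype.card_fun, ZMod.card]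
  have h5n : 5 ^ n = 5 * 5 ^ (n - 1) := by
    conv_lhs => rw [show n = 1 + (n - 1) by omega]
    rw [pow_add, pow_one]
  -- B and B + B are disjoint
  have hdisj : Disjoint B (B + B) := by
    rw [disjoint_left]
    intro x hxB hxS
    obtain ⟨a, ha, b, hb, rfl⟩ := mem_add.1 hxS
    exact hsf a ha b hb hxB
  have hcardU : K + (B + B).card ≤ 5 ^ n := by
    have h1 : (B ∪ (B + B)).card ≤ 5 ^ n := by
      rw [← hN, ← card_univ]; exact card_le_univ _
    rw [card_union_of_disjoint hdisj] at h1
    omega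
  have h32 : 2 * (B + B).card < 3 * K := by omega
  set D : Finset (Fin n → ZMod 5) := B - B with hDdef
  -- Step 1
  have step1 : ∀ x ∈ D, K + 1 ≤ 2 * (B.filter (fun c => c - x ∈ B)).card := by
    intro x hx
    obtain ⟨a, ha, b, hb, rfl⟩ := mem_sub.1 hx
    set X := B.image (a + ·) with hX
    set Y := B.image (b + ·) with hY
    have hXc : X.card = K := card_image_of_injective _ (add_right_injective a)
    have hYc : Y.card = K := card_image_of_injective _ (add_right_injective b)
    have hXY : X ∪ Y ⊆ B + B := by
      intro z hz
      rcases mem_union.1 hz with h | h <;> obtain ⟨c, hc, rfl⟩ := mem_image.1 h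
      · exact add_mem_add ha hc
      · exact add_mem_add hb hc
    have hinter : (X ∩ Y).card ≤ (B.filter (fun c => c - (a - b) ∈ B)).card := by
      apply card_le_card_of_injOn (fun z => z - b)
      · intro z hz
        obtain ⟨hz1, hz2⟩ := mem_inter.1 hz
        obtain ⟨c1, hc1, hc1z⟩ := mem_image.1 hz1
        obtain ⟨c2, hc2, hc2z⟩ := mem_image.1 hz2
        rw [mem_coe, mem_filter]
        constructor
        · rw [← hc2z]; simpa using hc2
        · rw [← hc1z]
          have : a + c1 - b - (a - b) = c1 := by ring
          rw [this]; exact hc1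
      · intro z1 _ z2 _ h
        exact sub_left_injective h
    have key := card_union_add_card_inter X Y
    have h1 : (X ∪ Y).card ≤ (B + B).card := card_le_card hXY
    omega
  -- closure of D under subtraction
  have hDsub : ∀ x ∈ D, ∀ y ∈ D, x - y ∈ D := by
    intro x hx y hy
    have h1 := step1 x hx
    have h2 := step1 y hy
    set X := B.filter (fun c => c - x ∈ B) with hX
    set Y := B.filter (fun c => c - y ∈ B) with hY
    have key := card_union_add_card_inter X Y
    have hu : (X ∪ Y).card ≤ K :=
      card_le_card (union_subset (filter_subset _ _) (filter_subset _ _))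
    have hne : (X ∩ Y).Nonempty := card_pos.1 (by omega)
    obtain ⟨z, hz⟩ := hne
    obtain ⟨hz1, hz2⟩ := mem_inter.1 hz
    have hzx : z - x ∈ B := (mem_filter.1 hz1).2
    have hzy : z - y ∈ B := (mem_filter.1 hz2).2
    have : x - y = (z - y) - (z - x) := by ring
    rw [this]
    exact sub_mem_sub hzy hzx
  -- |D| < 2K by double counting
  have hfib : ∀ x ∈ D, K + 1 ≤ 2 * ((B ×ˢ B).filter (fun p => p.1 - p.2 = x)).card := by
    intro x hx
    have h1 := step1 x hx
    have h2 : (B.filter (fun c => c - x ∈ B)).card ≤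
        ((B ×ˢ B).filter (fun p => p.1 - p.2 = x)).card := by
      apply card_le_card_of_injOn (fun c => (c, c - x))
      · intro c hc
        obtain ⟨hc1, hc2⟩ := mem_filter.1 hc
        rw [mem_coe, mem_filter, mem_product]
        exact ⟨⟨hc1, hc2⟩, by ring⟩
      · intro c1 _ c2 _ h
        exact congrArg Prod.fst h
    omega
  have hcount : (B ×ˢ B).card = ∑ x ∈ D, ((B ×ˢ B).filter (fun p => p.1 - p.2 = x)).card := by
    apply card_eq_sum_card_fiberwise
    intro p hp
    obtain ⟨h1, h2⟩ := mem_product.1 hp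
    exact sub_mem_sub h1 h2
  have hDK : D.card < 2 * K := by
    have hsum : D.card * (K + 1) ≤ ∑ x ∈ D, 2 * ((B ×ˢ B).filter (fun p => p.1 - p.2 = x)).card := by
      have := Finset.card_nsmul_le_sum D
        (fun x => 2 * ((B ×ˢ B).filter (fun p => p.1 - p.2 = x)).card) (K + 1) hfib
      simpa [smul_eq_mul] using this
    rw [← Finset.mul_sum, ← hcount, card_product] at hsum
    nlinarith
  -- D stabilizes B + B
  have hstab : ∀ h ∈ D, ∀ p ∈ B, ∀ q ∈ B, h + p + q ∈ B + B := by
    intro h hh p hp q hq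
    set T := B.image (fun a => h + p + q - a) with hT
    set C := D.image (fun d => q + d) with hC
    have hTc : T.card = K := card_image_of_injective _ (fun a b hab => by
      have : h + p + q - a = h + p + q - b := hab
      exact sub_right_injective this)
    have hCc : C.card = D.card := card_image_of_injective _ (add_right_injective q)
    have hTC : T ⊆ C := by
      intro z hz
      obtain ⟨a, ha, rfl⟩ := mem_image.1 hz
      refine mem_image.2 ⟨h - (a - p), hDsub h hh (a - p) (sub_mem_sub ha hp), by ring⟩
    have hBC : B ⊆ C := by
      intro a ha
      refine mem_image.2 ⟨a - q, ?_, by ring⟩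
      exact sub_mem_sub ha hq
    have key := card_union_add_card_inter B T
    have h1 : (B ∪ T).card ≤ C.card := card_le_card (union_subset hBC hTC)
    have hne : (B ∩ T).Nonempty := card_pos.1 (by omega)
    obtain ⟨z, hz⟩ := hne
    obtain ⟨hzB, hzT⟩ := mem_inter.1 hz
    obtain ⟨a, ha, haz⟩ := mem_image.1 hzT
    have : h + p + q = z + a := by rw [← haz]; ring
    rw [this]
    exact add_mem_add hzB ha
  by_cases hDuniv : D = Finset.univ
  · -- then B + B = everything, contradicting disjointness
    have h1 : (-a₀) + a₀ + a₀ ∈ B + B :=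
      hstab (-a₀) (by rw [hDuniv]; exact mem_univ _) a₀ ha₀ a₀ ha₀
    have h2 : (-a₀) + a₀ + a₀ = a₀ := by ring
    rw [h2] at h1
    exact disjoint_left.1 hdisj ha₀ h1
  · -- D is a proper subgroup, so |D| ≤ 5^(n-1), but B ⊆ coset of D
    have h0D : (0 : Fin n → ZMod 5) ∈ D := by
      have h := sub_mem_sub ha₀ ha₀
      rwa [sub_self] at h
    have hnegD : ∀ x ∈ D, -x ∈ D := by
      intro x hx
      have := hDsub 0 h0D x hx
      simpa using this
    have haddD : ∀ x ∈ D, ∀ y ∈ D, x + y ∈ D := by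
      intro x hx y hy
      have := hDsub x hx (-y) (hnegD y hy)
      simpa [sub_neg_eq_add] using this
    set H : AddSubgroup (Fin n → ZMod 5) :=
      { carrier := ↑D
        zero_mem' := h0D
        add_mem' := fun ha hb => haddD _ ha _ hb
        neg_mem' := fun ha => hnegD _ ha } with hH
    have hdvd : D.card ∣ 5 ^ n := by
      have h1 := AddSubgroup.card_addSubgroup_dvd_card H
      have h2 : Nat.card H = D.card := by
        rw [hH]
        simp [Nat.card_eq_fintype_card]
      have h3 : Nat.card (Fin n → ZMod 5) = 5 ^ n := by rw [Nat.card_eq_fintype_card, hN]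
      rwa [h2, h3] at h1
    obtain ⟨m, hm, hDm⟩ := (Nat.dvd_prime_pow (by norm_num)).1 hdvd
    have hmn : m ≠ n := by
      intro hmn
      apply hDuniv
      apply Finset.eq_univ_of_card
      rw [hN, hDm, hmn]
    have hDle : D.card ≤ 5 ^ (n - 1) := by
      rw [hDm]
      exact Nat.pow_le_pow_right (by norm_num) (by omega)
    have hKD : K ≤ D.card := by
      apply card_le_card_of_injOn (fun x => x - a₀)
      · intro x hx
        exact sub_mem_sub hx ha₀
      · intro x _ y _ h
        exact sub_left_injective h
    omega
end
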